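/- arXiv:1609.01370 — 3 statements merged into one kernel-verified Lean document; each statement's English description precedes it below -/
import Mathlib

section
/- For the Mallows(q) distribution on S_n with q > 0 and m ≥ 1, let x_j be the indicator that the pattern σ ∈ S_m occurs at position j (i.e., st(π_j...π_{j+m−1}) = σ). If |i − j| ≥ m, then x_i and x_j are independent: P(x_i = 1 and x_j = 1) = P(x_i = 1)·P(x_j = 1). -/
open scoped Classical

/-- The q-integer `[k]_q = 1 + q + ... + q^(k-1)`. -/
noncomputable def qint (q : ℝ) (k : ℕ) : ℝ := ∑ i ∈ Finset.range k, q ^ i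

/-- The q-factorial `[n]_q! = [1]_q [2]_q ⋯ [n]_q`. -/
noncomputable def qfact (q : ℝ) (n : ℕ) : ℝ := ∏ i ∈ Finset.range n, qint q (i + 1)

/-- The number of inversions of a permutation of `{0, ..., n-1}`. -/
def inversions {n : ℕ} (π : Equiv.Perm (Fin n)) : ℕ :=
  (Finset.univ.filter (fun p : Fin n × Fin n => p.1 < p.2 ∧ π p.2 < π p.1)).card

/-- The pattern `σ ∈ S_m` occurs consecutively in `π ∈ S_n` starting at (0-indexed) position `j`:
the window `π_j, ..., π_{j+m-1}` is order-isomorphic to `σ`. -/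
def occursAt {m n : ℕ} (σ : Equiv.Perm (Fin m)) (π : Equiv.Perm (Fin n)) (j : ℕ) : Prop :=
  ∃ h : j + m ≤ n, ∀ a b : Fin m,
    σ a < σ b ↔
      π ⟨j + (a : ℕ), lt_of_lt_of_le (Nat.add_lt_add_left a.isLt j) h⟩ <
      π ⟨j + (b : ℕ), lt_of_lt_of_le (Nat.add_lt_add_left b.isLt j) h⟩

/-- `π` avoids `σ` as a consecutive pattern. -/
def avoids {m n : ℕ} (σ : Equiv.Perm (Fin m)) (π : Equiv.Perm (Fin n)) : Prop :=
  ∀ j : ℕ, ¬ occursAt σ π j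

/-- `P_n(σ, q)`: the probability that a Mallows(q) random permutation of length `n`
avoids `σ` as a consecutive pattern. -/
noncomputable def Pn (m : ℕ) (σ : Equiv.Perm (Fin m)) (q : ℝ) (n : ℕ) : ℝ :=
  (∑ π ∈ Finset.univ.filter (fun π : Equiv.Perm (Fin n) => avoids σ π),
    q ^ inversions π) / qfact q n

namespace MallowsAux

open Finset Equiv

variable {m n : ℕ}

/-- Two permutations of `Fin m` with the same relative order are equal. -/
lemma st_unique {μ ν : Equiv.Perm (Fin m)} (h : ∀ a b : Fin m, μ a < μ b ↔ ν a < ν b) :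
    μ = ν := by
  have hg : StrictMono (fun a => μ (ν⁻¹ a)) := by
    intro a b hab
    rw [h]
    simpa using hab
  have hr : (fun a => μ (ν⁻¹ a)) = (id : Fin m → Fin m) := by
    refine (hg.range_inj strictMono_id).1 ?_
    have h1 : Function.Surjective (fun a => μ (ν⁻¹ a)) :=
      μ.surjective.comp ν⁻¹.surjective
    rw [h1.range_eq, Set.range_id]
  apply Equiv.ext
  intro b
  simpa using congrFun hr (ν b)

lemma occursAt_congr {σ : Equiv.Perm (Fin m)} {π π' : Equiv.Perm (Fin n)} {j : ℕ}
    (hagree : ∀ k : Fin n, j ≤ (k : ℕ) → (k : ℕ) < j + m → π k = π' k) :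
    occursAt σ π j ↔ occursAt σ π' j := by
  constructor <;> rintro ⟨h, hh⟩ <;> refine ⟨h, fun a b => ?_⟩
  · rw [← hagree _ (Nat.le_add_right _ _) (Nat.add_lt_add_left a.isLt j),
      ← hagree _ (Nat.le_add_right _ _) (Nat.add_lt_add_left b.isLt j)]
    exact hh a b
  · rw [hagree _ (Nat.le_add_right _ _) (Nat.add_lt_add_left a.isLt j),
      hagree _ (Nat.le_add_right _ _) (Nat.add_lt_add_left b.isLt j)]
    exact hh a b

/-- The values of `π` in the window starting at `j`. -/
def winF (j : ℕ) (h : j + m ≤ n) (π : Equiv.Perm (Fin n)) (a : Fin m) : Fin n :=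
  π ⟨j + (a : ℕ), by have := a.isLt; omega⟩

lemma winF_inj (j : ℕ) (h : j + m ≤ n) (π : Equiv.Perm (Fin n)) :
    Function.Injective (winF j h π) := by
  intro a b hab
  have := π.injective hab
  simp only [Fin.mk.injEq] at this
  exact Fin.ext (by omega)

lemma card_winImage (j : ℕ) (h : j + m ≤ n) (π : Equiv.Perm (Fin n)) :
    (Finset.univ.image (winF j h π)).card = m := by
  rw [Finset.card_image_of_injective _ (winF_inj j h π), Finset.card_univ, Fintype.card_fin]

/-- The standardization (pattern) of the window of `π` starting at `j`. -/
noncomputable def windowPattern (j : ℕ) (h : j + m ≤ n) (π : Equiv.Perm (Fin n)) :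
    Equiv.Perm (Fin m) :=
  Equiv.ofBijective
    (fun a => ((Finset.univ.image (winF j h π)).orderIsoOfFin (card_winImage j h π)).symm
      ⟨winF j h π a, Finset.mem_image_of_mem _ (Finset.mem_univ a)⟩)
    (by
      refine Finite.injective_iff_bijective.1 ?_
      intro a b hab
      apply winF_inj j h π
      have := (((Finset.univ.image (winF j h π)).orderIsoOfFin
        (card_winImage j h π)).symm).injective hab
      simpa [Subtype.ext_iff] using this)

lemma windowPattern_lt_iff (j : ℕ) (h : j + m ≤ n) (π : Equiv.Perm (Fin n)) (a b : Fin m) :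
    windowPattern j h π a < windowPattern j h π b ↔ winF j h π a < winF j h π b := by
  simp only [windowPattern, Equiv.ofBijective_apply]
  rw [OrderIso.lt_iff_lt]
  exact Iff.rfl

lemma occursAt_windowPattern (j : ℕ) (h : j + m ≤ n) (π : Equiv.Perm (Fin n)) :
    occursAt (windowPattern j h π) π j := by
  refine ⟨h, fun a b => ?_⟩
  rw [windowPattern_lt_iff]
  exact Iff.rfl

lemma occursAt_iff_windowPattern {τ : Equiv.Perm (Fin m)} {π : Equiv.Perm (Fin n)} {j : ℕ}
    (h : j + m ≤ n) : occursAt τ π j ↔ windowPattern j h π = τ := by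
  constructor
  · rintro ⟨h', hh⟩
    refine st_unique (fun a b => ?_)
    rw [windowPattern_lt_iff]
    exact (hh a b).symm
  · rintro rfl
    exact occursAt_windowPattern j h π

end MallowsAux

namespace MallowsAux

open Finset Equiv

variable {m n : ℕ}

/-- The window `[j, j+m)` inside `Fin n`, as a subtype equivalent to `Fin m`. -/
def winEquiv (j : ℕ) (h : j + m ≤ n) :
    Fin m ≃ {k : Fin n // j ≤ (k : ℕ) ∧ (k : ℕ) < j + m} where
  toFun a := ⟨⟨j + (a : ℕ), by have := a.isLt; omega⟩, by
    constructor
    · exact Nat.le_add_right _ _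
    · exact Nat.add_lt_add_left a.isLt j⟩
  invFun k := ⟨(k : Fin n) - j, by have := k.2; omega⟩
  left_inv a := by
    apply Fin.ext
    simp
  right_inv k := by
    apply Subtype.ext
    apply Fin.ext
    have := k.2
    show j + ((k : Fin n) - j : ℕ) = ((k : Fin n) : ℕ)
    omega

/-- The permutation of `Fin n` acting as `τ` inside the window `[j, j+m)` and
fixing everything else. -/
noncomputable def blockPerm (j : ℕ) (h : j + m ≤ n) (τ : Equiv.Perm (Fin m)) :
    Equiv.Perm (Fin n) :=
  τ.extendDomain (winEquiv j h)

lemma blockPerm_apply_not_mem {j : ℕ} (h : j + m ≤ n) (τ : Equiv.Perm (Fin m)) {k : Fin n}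
    (hk : ¬(j ≤ (k : ℕ) ∧ (k : ℕ) < j + m)) : blockPerm j h τ k = k :=
  Equiv.Perm.extendDomain_apply_not_subtype _ _ hk

lemma blockPerm_apply_add {j : ℕ} (h : j + m ≤ n) (τ : Equiv.Perm (Fin m)) (a : Fin m)
    (pf : j + (a : ℕ) < n) (pf' : j + ((τ a : Fin m) : ℕ) < n) :
    blockPerm j h τ ⟨j + (a : ℕ), pf⟩ = ⟨j + ((τ a : Fin m) : ℕ), pf'⟩ := by
  have h1 := Equiv.Perm.extendDomain_apply_image (e := τ) (f := winEquiv j h) a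
  exact h1

lemma blockPerm_apply_mem {j : ℕ} (h : j + m ≤ n) (τ : Equiv.Perm (Fin m)) {k : Fin n}
    (hk : j ≤ (k : ℕ) ∧ (k : ℕ) < j + m) :
    blockPerm j h τ k = ⟨j + (τ ⟨(k : ℕ) - j, by omega⟩ : Fin m),
      by have := (τ ⟨(k : ℕ) - j, by omega⟩).isLt; omega⟩ := by
  have hk' : k = ⟨j + ((⟨(k : ℕ) - j, by omega⟩ : Fin m) : ℕ), by
      show j + ((k : ℕ) - j) < n; have := k.isLt; omega⟩ := by
    apply Fin.ext
    show (k : ℕ) = j + ((k : ℕ) - j)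
    omega
  conv_lhs => rw [hk']
  rw [blockPerm_apply_add]

lemma blockPerm_mem_iff {j : ℕ} (h : j + m ≤ n) (τ : Equiv.Perm (Fin m)) (k : Fin n) :
    (j ≤ (blockPerm j h τ k : ℕ) ∧ (blockPerm j h τ k : ℕ) < j + m) ↔
      (j ≤ (k : ℕ) ∧ (k : ℕ) < j + m) := by
  by_cases hk : j ≤ (k : ℕ) ∧ (k : ℕ) < j + m
  · rw [blockPerm_apply_mem h τ hk]
    have := (τ ⟨(k : ℕ) - j, by omega⟩).isLt
    show (j ≤ j + _ ∧ j + _ < j + m) ↔ _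
    omega
  · rw [blockPerm_apply_not_mem h τ hk]

lemma blockPerm_inv {j : ℕ} (h : j + m ≤ n) (τ : Equiv.Perm (Fin m)) :
    (blockPerm j h τ)⁻¹ = blockPerm j h τ⁻¹ :=
  Equiv.Perm.extendDomain_inv _ _

lemma blockPerm_lt {j : ℕ} (h : j + m ≤ n) (τ : Equiv.Perm (Fin m)) {p q : Fin n}
    (hpq : p < q) (hnot : ¬((j ≤ (p : ℕ) ∧ (p : ℕ) < j + m) ∧ (j ≤ (q : ℕ) ∧ (q : ℕ) < j + m))) :
    blockPerm j h τ p < blockPerm j h τ q := by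
  rw [Fin.lt_def] at hpq ⊢
  by_cases hp : j ≤ (p : ℕ) ∧ (p : ℕ) < j + m
  · have hq : ¬(j ≤ (q : ℕ) ∧ (q : ℕ) < j + m) := fun hq => hnot ⟨hp, hq⟩
    rw [blockPerm_apply_mem h τ hp, blockPerm_apply_not_mem h τ hq]
    have := (τ ⟨(p : ℕ) - j, by omega⟩).isLt
    show j + _ < (q : ℕ)
    omega
  · by_cases hq : j ≤ (q : ℕ) ∧ (q : ℕ) < j + m
    · rw [blockPerm_apply_not_mem h τ hp, blockPerm_apply_mem h τ hq]
      show (p : ℕ) < j + _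
      omega
    · rw [blockPerm_apply_not_mem h τ hp, blockPerm_apply_not_mem h τ hq]
      exact hpq

end MallowsAux

namespace MallowsAux

open Finset Equiv

variable {m n : ℕ}

lemma inversions_one (k : ℕ) : inversions (1 : Equiv.Perm (Fin k)) = 0 := by
  rw [inversions, Finset.card_eq_zero, Finset.filter_eq_empty_iff]
  rintro p -
  rintro ⟨h1, h2⟩
  simp only [Equiv.Perm.one_apply] at h2
  exact absurd h2 (not_lt.2 h1.le)

lemma inversions_mul_blockPerm {j : ℕ} (h : j + m ≤ n) (τ : Equiv.Perm (Fin m))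
    (π : Equiv.Perm (Fin n)) (hπ : occursAt (1 : Equiv.Perm (Fin m)) π j) :
    inversions (π * blockPerm j h τ) = inversions π + inversions τ := by
  obtain ⟨h', hmono⟩ := hπ
  simp only [Equiv.Perm.one_apply] at hmono
  set B := blockPerm j h τ with hB
  set Cin : Fin n × Fin n → Prop := fun p =>
    (j ≤ (p.1 : ℕ) ∧ (p.1 : ℕ) < j + m) ∧ (j ≤ (p.2 : ℕ) ∧ (p.2 : ℕ) < j + m) with hCin
  have split : ∀ ρ : Equiv.Perm (Fin n), inversions ρ =
      ((Finset.univ.filter (fun p : Fin n × Fin n => p.1 < p.2 ∧ ρ p.2 < ρ p.1)).filter Cin).card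
      + ((Finset.univ.filter (fun p : Fin n × Fin n => p.1 < p.2 ∧ ρ p.2 < ρ p.1)).filter
          (fun p => ¬ Cin p)).card := by
    intro ρ
    rw [inversions]
    exact (Finset.card_filter_add_card_filter_not Cin).symm
  -- the window part for `π` is empty
  have hin_pi : ((Finset.univ.filter
      (fun p : Fin n × Fin n => p.1 < p.2 ∧ π p.2 < π p.1)).filter Cin) = ∅ := by
    rw [Finset.filter_eq_empty_iff]
    rintro p hp ⟨hp1, hp2⟩
    obtain ⟨-, hlt, hinv⟩ := Finset.mem_filter.1 hp
    have hab : (⟨(p.1 : ℕ) - j, by omega⟩ : Fin m) < (⟨(p.2 : ℕ) - j, by omega⟩ : Fin m) := by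
      rw [Fin.lt_def]
      have := Fin.lt_def.1 hlt
      simp only [Fin.val_mk]
      omega
    have := (hmono _ _).1 hab
    have e1 : (⟨j + ((⟨(p.1 : ℕ) - j, by omega⟩ : Fin m) : ℕ), by omega⟩ : Fin n) = p.1 := by
      apply Fin.ext; simp only [Fin.val_mk]; omega
    have e2 : (⟨j + ((⟨(p.2 : ℕ) - j, by omega⟩ : Fin m) : ℕ), by omega⟩ : Fin n) = p.2 := by
      apply Fin.ext; simp only [Fin.val_mk]; omega
    rw [e1, e2] at this
    exact absurd hinv (not_lt.2 this.le)
  -- the window part of `π * B` counts the inversions of `τ`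
  have hin_rho : ((Finset.univ.filter
      (fun p : Fin n × Fin n => p.1 < p.2 ∧ (π * B) p.2 < (π * B) p.1)).filter Cin).card
      = inversions τ := by
    rw [inversions]
    refine Finset.card_bij'
      (i := fun p hp => ((⟨(p.1 : ℕ) - j, by
          obtain ⟨h1, h2⟩ := (Finset.mem_filter.1 hp).2; omega⟩ : Fin m),
        (⟨(p.2 : ℕ) - j, by
          obtain ⟨h1, h2⟩ := (Finset.mem_filter.1 hp).2; omega⟩ : Fin m)))
      (j := fun p _ => ((⟨j + (p.1 : ℕ), by have := p.1.isLt; omega⟩ : Fin n),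
        (⟨j + (p.2 : ℕ), by have := p.2.isLt; omega⟩ : Fin n)))
      ?_ ?_ ?_ ?_
    · rintro p hp
      obtain ⟨hmem, hc1, hc2⟩ := Finset.mem_filter.1 hp
      obtain ⟨-, hlt, hinv⟩ := Finset.mem_filter.1 hmem
      rw [Finset.mem_filter]
      refine ⟨Finset.mem_univ _, ?_, ?_⟩
      · rw [Fin.lt_def]
        have := Fin.lt_def.1 hlt
        simp only [Fin.val_mk]
        omega
      · -- τ _ < τ _
        have e1 := blockPerm_apply_mem h τ hc1
        have e2 := blockPerm_apply_mem h τ hc2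
        simp only [Equiv.Perm.mul_apply] at hinv
        rw [hB] at hinv
        rw [e1, e2] at hinv
        exact (hmono _ _).2 hinv
    · rintro p hp
      obtain ⟨-, hlt, hinv⟩ := Finset.mem_filter.1 hp
      rw [Finset.mem_filter, Finset.mem_filter]
      refine ⟨⟨Finset.mem_univ _, ?_, ?_⟩, ?_, ?_⟩
      · rw [Fin.lt_def]
        simp only [Fin.val_mk]
        exact Nat.add_lt_add_left (Fin.lt_def.1 hlt) j
      · simp only [Equiv.Perm.mul_apply, hB]
        rw [blockPerm_apply_add h τ p.1 (by have := p.1.isLt; omega)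
            (by have := (τ p.1).isLt; omega),
          blockPerm_apply_add h τ p.2 (by have := p.2.isLt; omega)
            (by have := (τ p.2).isLt; omega)]
        exact (hmono _ _).1 hinv
      · simp only [Fin.val_mk]
        have := p.1.isLt
        omega
      · simp only [Fin.val_mk]
        have := p.2.isLt
        omega
    · rintro p hp
      obtain ⟨-, hc1, hc2⟩ := Finset.mem_filter.1 hp
      apply Prod.ext <;> apply Fin.ext <;> simp only [Fin.val_mk] <;> omega
    · rintro p hp
      apply Prod.ext <;> apply Fin.ext <;> simp only [Fin.val_mk] <;> omega
  -- the outside parts agree for `π * B` and `π`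
  have hout : ((Finset.univ.filter
      (fun p : Fin n × Fin n => p.1 < p.2 ∧ (π * B) p.2 < (π * B) p.1)).filter
        (fun p => ¬ Cin p)).card
      = ((Finset.univ.filter
      (fun p : Fin n × Fin n => p.1 < p.2 ∧ π p.2 < π p.1)).filter
        (fun p => ¬ Cin p)).card := by
    refine Finset.card_bij'
      (i := fun p _ => (B p.1, B p.2)) (j := fun p _ => (B⁻¹ p.1, B⁻¹ p.2)) ?_ ?_ ?_ ?_
    · rintro p hp
      obtain ⟨hmem, hnc⟩ := Finset.mem_filter.1 hp
      obtain ⟨-, hlt, hinv⟩ := Finset.mem_filter.1 hmem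
      rw [Finset.mem_filter, Finset.mem_filter]
      refine ⟨⟨Finset.mem_univ _, ?_, ?_⟩, ?_⟩
      · exact blockPerm_lt h τ hlt hnc
      · simpa only [Equiv.Perm.mul_apply] using hinv
      · show ¬ Cin (B p.1, B p.2)
        simp only [hCin, hB, blockPerm_mem_iff h τ]
        exact hnc
    · rintro p hp
      obtain ⟨hmem, hnc⟩ := Finset.mem_filter.1 hp
      obtain ⟨-, hlt, hinv⟩ := Finset.mem_filter.1 hmem
      rw [Finset.mem_filter, Finset.mem_filter]
      have hBinv : B⁻¹ = blockPerm j h τ⁻¹ := blockPerm_inv h τ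
      refine ⟨⟨Finset.mem_univ _, ?_, ?_⟩, ?_⟩
      · rw [hBinv]
        exact blockPerm_lt h τ⁻¹ hlt hnc
      · simp only [Equiv.Perm.mul_apply, Equiv.Perm.inv_def, Equiv.apply_symm_apply]
        exact hinv
      · show ¬ Cin (B⁻¹ p.1, B⁻¹ p.2)
        rw [hBinv]
        simp only [hCin, blockPerm_mem_iff h τ⁻¹]
        exact hnc
    · rintro p hp
      simp
    · rintro p hp
      simp
  rw [split (π * B), split π, hin_pi, hin_rho, hout]
  simp only [Finset.card_empty]
  omega

end MallowsAux

namespace MallowsAux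

open Finset Equiv

variable {m n : ℕ}

lemma occursAt_mul_blockPerm {σ : Equiv.Perm (Fin m)} {π : Equiv.Perm (Fin n)} {j : ℕ}
    (h : j + m ≤ n) (τ : Equiv.Perm (Fin m)) (hσ : occursAt σ π j) :
    occursAt (σ * τ) (π * blockPerm j h τ) j := by
  obtain ⟨h', hσ⟩ := hσ
  refine ⟨h, fun a b => ?_⟩
  simp only [Equiv.Perm.mul_apply]
  rw [blockPerm_apply_add h τ a (by have := a.isLt; omega) (by have := (τ a).isLt; omega),
    blockPerm_apply_add h τ b (by have := b.isLt; omega) (by have := (τ b).isLt; omega)]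
  exact hσ (τ a) (τ b)

lemma occursAt_mul_blockPerm_other {mi : ℕ} {σ : Equiv.Perm (Fin mi)} {π : Equiv.Perm (Fin n)}
    {i j : ℕ} (h : j + m ≤ n) (τ : Equiv.Perm (Fin m)) (hne : i + mi ≤ j ∨ j + m ≤ i) :
    occursAt σ (π * blockPerm j h τ) i ↔ occursAt σ π i := by
  refine occursAt_congr (fun k hk1 hk2 => ?_)
  show π (blockPerm j h τ k) = π k
  rw [blockPerm_apply_not_mem h τ (by omega)]

lemma blockPerm_inv_mul {j : ℕ} (h : j + m ≤ n) (τ : Equiv.Perm (Fin m)) :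
    blockPerm j h τ⁻¹ * blockPerm j h τ = 1 := by
  rw [← blockPerm_inv]
  simp

lemma blockPerm_mul_inv {j : ℕ} (h : j + m ≤ n) (τ : Equiv.Perm (Fin m)) :
    blockPerm j h τ * blockPerm j h τ⁻¹ = 1 := by
  rw [← blockPerm_inv]
  simp

lemma sum_twist (q : ℝ) {j : ℕ} (h : j + m ≤ n) (σ : Equiv.Perm (Fin m)) :
    ∑ π ∈ Finset.univ.filter (fun π : Equiv.Perm (Fin n) => occursAt σ π j),
      q ^ inversions π
    = q ^ inversions σ *
      ∑ π ∈ Finset.univ.filter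
        (fun π : Equiv.Perm (Fin n) => occursAt (1 : Equiv.Perm (Fin m)) π j),
        q ^ inversions π := by
  rw [Finset.mul_sum]
  refine Finset.sum_nbij' (i := fun π => π * blockPerm j h σ⁻¹)
    (j := fun π => π * blockPerm j h σ) ?_ ?_ ?_ ?_ ?_
  · intro π hπ
    rw [Finset.mem_filter] at hπ ⊢
    refine ⟨Finset.mem_univ _, ?_⟩
    have := occursAt_mul_blockPerm h σ⁻¹ hπ.2
    rwa [mul_inv_cancel] at this
  · intro π hπ
    rw [Finset.mem_filter] at hπ ⊢
    refine ⟨Finset.mem_univ _, ?_⟩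
    have := occursAt_mul_blockPerm h σ hπ.2
    rwa [one_mul] at this
  · intro π _
    show π * blockPerm j h σ⁻¹ * blockPerm j h σ = π
    rw [mul_assoc, blockPerm_inv_mul, mul_one]
  · intro π _
    show π * blockPerm j h σ * blockPerm j h σ⁻¹ = π
    rw [mul_assoc, blockPerm_mul_inv, mul_one]
  · intro π hπ
    rw [Finset.mem_filter] at hπ
    have hsorted : occursAt (1 : Equiv.Perm (Fin m)) (π * blockPerm j h σ⁻¹) j := by
      have := occursAt_mul_blockPerm h σ⁻¹ hπ.2
      rwa [mul_inv_cancel] at this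
    have hrec : (π * blockPerm j h σ⁻¹) * blockPerm j h σ = π := by
      rw [mul_assoc, blockPerm_inv_mul, mul_one]
    have := inversions_mul_blockPerm h σ (π * blockPerm j h σ⁻¹) hsorted
    rw [hrec] at this
    rw [this, pow_add, mul_comm]

lemma sum_twist₂ (q : ℝ) {i j : ℕ} (hi : i + m ≤ n) (hj : j + m ≤ n) (hd : i + m ≤ j)
    (σ τ : Equiv.Perm (Fin m)) :
    ∑ π ∈ Finset.univ.filter
        (fun π : Equiv.Perm (Fin n) => occursAt σ π i ∧ occursAt τ π j),
      q ^ inversions π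
    = q ^ inversions σ * q ^ inversions τ *
      ∑ π ∈ Finset.univ.filter
        (fun π : Equiv.Perm (Fin n) => occursAt (1 : Equiv.Perm (Fin m)) π i ∧
          occursAt (1 : Equiv.Perm (Fin m)) π j),
        q ^ inversions π := by
  rw [Finset.mul_sum]
  have hdisj : i + m ≤ j ∨ j + m ≤ i := Or.inl hd
  have hdisj' : j + m ≤ i ∨ i + m ≤ j := Or.inr hd
  refine Finset.sum_nbij' (i := fun π => π * blockPerm i hi σ⁻¹ * blockPerm j hj τ⁻¹)
    (j := fun π => π * blockPerm j hj τ * blockPerm i hi σ) ?_ ?_ ?_ ?_ ?_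
  · intro π hπ
    rw [Finset.mem_filter] at hπ ⊢
    obtain ⟨-, hoi, hoj⟩ := hπ
    refine ⟨Finset.mem_univ _, ?_, ?_⟩
    · rw [occursAt_mul_blockPerm_other hj τ⁻¹ hdisj]
      have := occursAt_mul_blockPerm hi σ⁻¹ hoi
      rwa [mul_inv_cancel] at this
    · have hoj' : occursAt τ (π * blockPerm i hi σ⁻¹) j :=
        (occursAt_mul_blockPerm_other hi σ⁻¹ hdisj').2 hoj
      have := occursAt_mul_blockPerm hj τ⁻¹ hoj'
      rwa [mul_inv_cancel] at this
  · intro π hπ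
    rw [Finset.mem_filter] at hπ ⊢
    obtain ⟨-, hoi, hoj⟩ := hπ
    refine ⟨Finset.mem_univ _, ?_, ?_⟩
    · have hoi' : occursAt (1 : Equiv.Perm (Fin m)) (π * blockPerm j hj τ) i :=
        (occursAt_mul_blockPerm_other hj τ hdisj).2 hoi
      have := occursAt_mul_blockPerm hi σ hoi'
      rwa [one_mul] at this
    · rw [occursAt_mul_blockPerm_other hi σ hdisj']
      have := occursAt_mul_blockPerm hj τ hoj
      rwa [one_mul] at this
  · intro π _
    show π * blockPerm i hi σ⁻¹ * blockPerm j hj τ⁻¹ * blockPerm j hj τ * blockPerm i hi σ = π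
    rw [mul_assoc _ (blockPerm j hj τ⁻¹), blockPerm_inv_mul, mul_one, mul_assoc,
      blockPerm_inv_mul, mul_one]
  · intro π _
    show π * blockPerm j hj τ * blockPerm i hi σ * blockPerm i hi σ⁻¹ * blockPerm j hj τ⁻¹ = π
    rw [mul_assoc _ (blockPerm i hi σ), blockPerm_mul_inv, mul_one, mul_assoc,
      blockPerm_mul_inv, mul_one]
  · intro π hπ
    rw [Finset.mem_filter] at hπ
    obtain ⟨-, hoi, hoj⟩ := hπ
    set π₀ := π * blockPerm i hi σ⁻¹ * blockPerm j hj τ⁻¹ with hπ₀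
    have hsj : occursAt (1 : Equiv.Perm (Fin m)) π₀ j := by
      have hoj' : occursAt τ (π * blockPerm i hi σ⁻¹) j :=
        (occursAt_mul_blockPerm_other hi σ⁻¹ hdisj').2 hoj
      have := occursAt_mul_blockPerm hj τ⁻¹ hoj'
      rwa [mul_inv_cancel] at this
    have hsi : occursAt (1 : Equiv.Perm (Fin m)) π₀ i := by
      rw [hπ₀, occursAt_mul_blockPerm_other hj τ⁻¹ hdisj]
      have := occursAt_mul_blockPerm hi σ⁻¹ hoi
      rwa [mul_inv_cancel] at this
    have hrec1 : π₀ * blockPerm j hj τ = π * blockPerm i hi σ⁻¹ := by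
      rw [hπ₀, mul_assoc, blockPerm_inv_mul, mul_one]
    have hrec2 : (π₀ * blockPerm j hj τ) * blockPerm i hi σ = π := by
      rw [hrec1, mul_assoc, blockPerm_inv_mul, mul_one]
    have e1 : inversions (π₀ * blockPerm j hj τ) = inversions π₀ + inversions τ :=
      inversions_mul_blockPerm hj τ π₀ hsj
    have hsi' : occursAt (1 : Equiv.Perm (Fin m)) (π₀ * blockPerm j hj τ) i :=
      (occursAt_mul_blockPerm_other hj τ hdisj).2 hsi
    have e2 : inversions ((π₀ * blockPerm j hj τ) * blockPerm i hi σ)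
        = inversions (π₀ * blockPerm j hj τ) + inversions σ :=
      inversions_mul_blockPerm hi σ _ hsi'
    rw [hrec2, e1] at e2
    rw [e2, pow_add, pow_add]
    ring

end MallowsAux

namespace MallowsAux

open Finset Equiv

variable {m n : ℕ}

lemma sum_partition (q : ℝ) {j : ℕ} (h : j + m ≤ n) (s : Finset (Equiv.Perm (Fin n))) :
    ∑ π ∈ s, q ^ inversions π
    = ∑ τ : Equiv.Perm (Fin m), ∑ π ∈ s.filter (fun π => occursAt τ π j),
        q ^ inversions π := by
  rw [← Finset.sum_fiberwise s (fun π => windowPattern j h π) (fun π => q ^ inversions π)]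
  refine Finset.sum_congr rfl (fun τ _ => ?_)
  refine Finset.sum_congr ?_ (fun _ _ => rfl)
  apply Finset.filter_congr
  intro π _
  exact (occursAt_iff_windowPattern h).symm

/-- The value at position `k` of the permutation with first value `v` and increasing tail. -/
def tailF (N : ℕ) (v : Fin (N + 1)) (k : Fin (N + 1)) : Fin (N + 1) :=
  if (k : ℕ) = 0 then v
  else if (k : ℕ) ≤ (v : ℕ) then ⟨(k : ℕ) - 1, by have := k.isLt; omega⟩
  else k

lemma tailF_injective (N : ℕ) (v : Fin (N + 1)) : Function.Injective (tailF N v) := by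
  intro a b hab
  apply Fin.ext
  unfold tailF at hab
  have hv := v.isLt
  split_ifs at hab <;> simp only [Fin.ext_iff, Fin.val_mk] at hab ⊢ <;> omega

/-- The permutation with first value `v` and increasing tail. -/
noncomputable def tailPerm (N : ℕ) (v : Fin (N + 1)) : Equiv.Perm (Fin (N + 1)) :=
  Equiv.ofBijective (tailF N v) (Finite.injective_iff_bijective.1 (tailF_injective N v))

lemma tailPerm_apply (N : ℕ) (v : Fin (N + 1)) (k : Fin (N + 1)) :
    tailPerm N v k = tailF N v k := rfl

lemma tailPerm_val (N : ℕ) (v : Fin (N + 1)) (k : Fin (N + 1)) :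
    (tailPerm N v k : ℕ) =
      if (k : ℕ) = 0 then (v : ℕ) else if (k : ℕ) ≤ (v : ℕ) then (k : ℕ) - 1 else (k : ℕ) := by
  rw [tailPerm_apply, tailF]
  split_ifs <;> rfl

lemma tailPerm_zero (N : ℕ) (v : Fin (N + 1)) (pf : 0 < N + 1) :
    tailPerm N v ⟨0, pf⟩ = v := by
  apply Fin.ext
  rw [tailPerm_val]
  simp

lemma tailPerm_sorted (N : ℕ) (v : Fin (N + 1)) :
    occursAt (1 : Equiv.Perm (Fin N)) (tailPerm N v) 1 := by
  refine ⟨by omega, fun a b => ?_⟩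
  simp only [Equiv.Perm.one_apply]
  rw [Fin.lt_def, Fin.lt_def, tailPerm_val, tailPerm_val]
  have hv := v.isLt
  have ha := a.isLt
  have hb := b.isLt
  simp only [Fin.val_mk]
  split_ifs <;> omega

lemma tailPerm_mem_facts (N : ℕ) (v : Fin (N + 1)) (p : Fin (N + 1) × Fin (N + 1))
    (hlt : p.1 < p.2) (hinv : tailPerm N v p.2 < tailPerm N v p.1) :
    (p.1 : ℕ) = 0 ∧ 1 ≤ (p.2 : ℕ) ∧ (p.2 : ℕ) ≤ (v : ℕ) := by
  rw [Fin.lt_def] at hlt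
  have h1 := Fin.lt_def.1 hinv
  rw [tailPerm_val, tailPerm_val] at h1
  have hv := v.isLt
  have h2 := p.2.isLt
  split_ifs at h1 <;> omega

lemma inversions_tailPerm (N : ℕ) (v : Fin (N + 1)) :
    inversions (tailPerm N v) = (v : ℕ) := by
  rw [inversions, ← Fin.card_Iio (b := v)]
  refine Finset.card_bij'
    (i := fun p hp => (⟨(p.2 : ℕ) - 1, by have := p.2.isLt; omega⟩ : Fin (N + 1)))
    (j := fun w hw => ((⟨0, by omega⟩ : Fin (N + 1)),
      (⟨(w : ℕ) + 1, by
        have h1 := Fin.lt_def.1 (Finset.mem_Iio.1 hw)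
        have := v.isLt
        omega⟩ : Fin (N + 1)))) ?_ ?_ ?_ ?_
  · rintro p hp
    obtain ⟨-, hlt, hinv⟩ := Finset.mem_filter.1 hp
    obtain ⟨h1, h2, h3⟩ := tailPerm_mem_facts N v p hlt hinv
    rw [Finset.mem_Iio, Fin.lt_def]
    simp only [Fin.val_mk]
    omega
  · rintro w hw
    have h1 := Fin.lt_def.1 (Finset.mem_Iio.1 hw)
    rw [Finset.mem_filter]
    refine ⟨Finset.mem_univ _, ?_, ?_⟩
    · rw [Fin.lt_def]
      simp
    · rw [Fin.lt_def, tailPerm_val, tailPerm_val]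
      rw [if_neg (by simp), if_pos (by simp only [Fin.val_mk]; omega), if_pos (by simp)]
      simp only [Fin.val_mk]
      omega
  · rintro p hp
    obtain ⟨-, hlt, hinv⟩ := Finset.mem_filter.1 hp
    obtain ⟨h1, h2, h3⟩ := tailPerm_mem_facts N v p hlt hinv
    apply Prod.ext <;> apply Fin.ext <;> simp only [Fin.val_mk] <;> omega
  · rintro w hw
    apply Fin.ext
    simp

lemma tail_sorted_unique {N : ℕ} {π π' : Equiv.Perm (Fin (N + 1))}
    (h1 : occursAt (1 : Equiv.Perm (Fin N)) π 1)
    (h2 : occursAt (1 : Equiv.Perm (Fin N)) π' 1)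
    (h0 : π ⟨0, by omega⟩ = π' ⟨0, by omega⟩) : π = π' := by
  obtain ⟨hle1, hm1⟩ := h1
  obtain ⟨hle2, hm2⟩ := h2
  simp only [Equiv.Perm.one_apply] at hm1 hm2
  set v : Fin (N + 1) := π ⟨0, by omega⟩ with hv
  have hcard : (Finset.univ.erase v).card = N := by
    rw [Finset.card_erase_of_mem (Finset.mem_univ _), Finset.card_univ]
    simp
  have key : ∀ (ρ : Equiv.Perm (Fin (N + 1))),
      (∀ a b : Fin N, a < b ↔ ρ ⟨1 + (a : ℕ), by have := a.isLt; omega⟩ <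
        ρ ⟨1 + (b : ℕ), by have := b.isLt; omega⟩) →
      ρ ⟨0, by omega⟩ = v →
      (fun a : Fin N => ρ ⟨1 + (a : ℕ), by have := a.isLt; omega⟩)
        = (Finset.univ.erase v).orderEmbOfFin hcard := by
    intro ρ hρ hρ0
    refine Finset.orderEmbOfFin_unique hcard (fun a => ?_) (fun a b hab => (hρ a b).1 hab)
    rw [Finset.mem_erase]
    refine ⟨?_, Finset.mem_univ _⟩
    intro hcontra
    have := ρ.injective (hcontra.trans hρ0.symm)
    simp only [Fin.mk.injEq] at this
    omega
  have k1 := key π hm1 rfl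
  have k2 := key π' hm2 h0.symm
  apply Equiv.ext
  intro k
  by_cases hk : (k : ℕ) = 0
  · have : k = ⟨0, by omega⟩ := Fin.ext hk
    rw [this]
    exact h0
  · have hk1 : (k : ℕ) - 1 < N := by have := k.isLt; omega
    have hkeq : k = ⟨1 + ((⟨(k : ℕ) - 1, hk1⟩ : Fin N) : ℕ), by
        simp only [Fin.val_mk]; have := k.isLt; omega⟩ := by
      apply Fin.ext
      simp only [Fin.val_mk]
      omega
    rw [hkeq]
    have := congrFun k1 ⟨(k : ℕ) - 1, hk1⟩
    have := congrFun k2 ⟨(k : ℕ) - 1, hk1⟩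
    simp only [] at *
    rw [congrFun k1 ⟨(k : ℕ) - 1, hk1⟩, congrFun k2 ⟨(k : ℕ) - 1, hk1⟩]

lemma sum_tail (q : ℝ) (N : ℕ) :
    ∑ π ∈ Finset.univ.filter
      (fun π : Equiv.Perm (Fin (N + 1)) => occursAt (1 : Equiv.Perm (Fin N)) π 1),
      q ^ inversions π = qint q (N + 1) := by
  rw [qint, ← Fin.sum_univ_eq_sum_range (fun i => q ^ i) (N + 1)]
  refine Finset.sum_nbij' (i := fun π => π ⟨0, by omega⟩) (j := fun v => tailPerm N v)
    ?_ ?_ ?_ ?_ ?_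
  · intro π _
    exact Finset.mem_univ _
  · intro v _
    rw [Finset.mem_filter]
    exact ⟨Finset.mem_univ _, tailPerm_sorted N v⟩
  · intro π hπ
    rw [Finset.mem_filter] at hπ
    exact tail_sorted_unique (tailPerm_sorted N _) hπ.2 (tailPerm_zero N _ (by omega))
  · intro v _
    exact tailPerm_zero N v (by omega)
  · intro π hπ
    rw [Finset.mem_filter] at hπ
    have huniq : tailPerm N (π ⟨0, by omega⟩) = π :=
      tail_sorted_unique (tailPerm_sorted N _) hπ.2 (tailPerm_zero N _ (by omega))
    conv_lhs => rw [← huniq]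
    rw [inversions_tailPerm]

lemma sum_univ_eq_qfact (q : ℝ) : ∀ N : ℕ,
    (∑ π ∈ (Finset.univ : Finset (Equiv.Perm (Fin N))), q ^ inversions π) = qfact q N := by
  intro N
  induction N with
  | zero =>
    have h1 : ∀ π : Equiv.Perm (Fin 0), π = 1 := fun π => Equiv.ext (fun x => x.elim0)
    rw [show (Finset.univ : Finset (Equiv.Perm (Fin 0))) = {1} from
      Finset.eq_singleton_iff_unique_mem.2 ⟨Finset.mem_univ _, fun x _ => h1 x⟩]
    rw [Finset.sum_singleton, inversions_one, pow_zero, qfact, Finset.prod_range_zero]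
  | succ N ih =>
    have h1 : 1 + N ≤ N + 1 := by omega
    rw [sum_partition q h1 Finset.univ]
    have step : ∀ τ : Equiv.Perm (Fin N),
        ∑ π ∈ Finset.univ.filter (fun π : Equiv.Perm (Fin (N + 1)) => occursAt τ π 1),
          q ^ inversions π
        = q ^ inversions τ *
          ∑ π ∈ Finset.univ.filter
            (fun π : Equiv.Perm (Fin (N + 1)) => occursAt (1 : Equiv.Perm (Fin N)) π 1),
            q ^ inversions π := fun τ => sum_twist q h1 τ
    rw [Finset.sum_congr rfl (fun τ _ => step τ), ← Finset.sum_mul, ih, sum_tail,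
      qfact, qfact, Finset.prod_range_succ]

end MallowsAux

namespace MallowsAux

open Finset Equiv

lemma qfact_pos {q : ℝ} (hq : 0 < q) (k : ℕ) : 0 < qfact q k := by
  rw [qfact]
  apply Finset.prod_pos
  intro i _
  rw [qint]
  refine Finset.sum_pos (fun t _ => by positivity) Finset.nonempty_range_add_one

lemma main_aux (m n : ℕ) (σ : Equiv.Perm (Fin m)) (q : ℝ) (hq : 0 < q) (i j : ℕ)
    (hi : i + m ≤ n) (hj : j + m ≤ n) (hd : i + m ≤ j) :
    (∑ π ∈ Finset.univ.filter
        (fun π : Equiv.Perm (Fin n) => occursAt σ π i ∧ occursAt σ π j),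
      q ^ inversions π) / qfact q n
    = ((∑ π ∈ Finset.univ.filter (fun π : Equiv.Perm (Fin n) => occursAt σ π i),
          q ^ inversions π) / qfact q n) *
      ((∑ π ∈ Finset.univ.filter (fun π : Equiv.Perm (Fin n) => occursAt σ π j),
          q ^ inversions π) / qfact q n) := by
  have hZm : (∑ τ ∈ (Finset.univ : Finset (Equiv.Perm (Fin m))), q ^ inversions τ)
      = qfact q m := sum_univ_eq_qfact q m
  have hZ : (∑ π ∈ (Finset.univ : Finset (Equiv.Perm (Fin n))), q ^ inversions π)
      = qfact q n := sum_univ_eq_qfact q n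
  set Ai := ∑ π ∈ Finset.univ.filter
      (fun π : Equiv.Perm (Fin n) => occursAt (1 : Equiv.Perm (Fin m)) π i),
      q ^ inversions π with hAi
  set Aj := ∑ π ∈ Finset.univ.filter
      (fun π : Equiv.Perm (Fin n) => occursAt (1 : Equiv.Perm (Fin m)) π j),
      q ^ inversions π with hAj
  set Aij := ∑ π ∈ Finset.univ.filter
      (fun π : Equiv.Perm (Fin n) => occursAt (1 : Equiv.Perm (Fin m)) π i ∧
        occursAt (1 : Equiv.Perm (Fin m)) π j),
      q ^ inversions π with hAij
  have h1 : (∑ π ∈ Finset.univ.filter (fun π : Equiv.Perm (Fin n) => occursAt σ π i),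
      q ^ inversions π) = q ^ inversions σ * Ai := sum_twist q hi σ
  have h2 : (∑ π ∈ Finset.univ.filter (fun π : Equiv.Perm (Fin n) => occursAt σ π j),
      q ^ inversions π) = q ^ inversions σ * Aj := sum_twist q hj σ
  have h3 : (∑ π ∈ Finset.univ.filter
      (fun π : Equiv.Perm (Fin n) => occursAt σ π i ∧ occursAt σ π j),
      q ^ inversions π) = q ^ inversions σ * q ^ inversions σ * Aij :=
    sum_twist₂ q hi hj hd σ σ
  have h4 : qfact q n = qfact q m * Ai := by
    rw [← hZ, sum_partition q hi Finset.univ,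
      Finset.sum_congr rfl (fun τ _ => sum_twist q hi τ), ← Finset.sum_mul, hZm]
  have h5 : qfact q n = qfact q m * Aj := by
    rw [← hZ, sum_partition q hj Finset.univ,
      Finset.sum_congr rfl (fun τ _ => sum_twist q hj τ), ← Finset.sum_mul, hZm]
  have h6 : Ai = qfact q m * Aij := by
    rw [hAi, sum_partition q hj (Finset.univ.filter
      (fun π : Equiv.Perm (Fin n) => occursAt (1 : Equiv.Perm (Fin m)) π i))]
    have hff : ∀ τ : Equiv.Perm (Fin m),
        (Finset.univ.filter
          (fun π : Equiv.Perm (Fin n) => occursAt (1 : Equiv.Perm (Fin m)) π i)).filter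
            (fun π => occursAt τ π j)
        = Finset.univ.filter (fun π : Equiv.Perm (Fin n) =>
            occursAt (1 : Equiv.Perm (Fin m)) π i ∧ occursAt τ π j) := fun τ => by
      rw [Finset.filter_filter]
    rw [Finset.sum_congr rfl (fun τ _ => by
      rw [hff τ, sum_twist₂ q hi hj hd 1 τ, inversions_one, pow_zero, one_mul]),
      ← Finset.sum_mul, hZm]
  have hFm : qfact q m ≠ 0 := ne_of_gt (qfact_pos hq m)
  have hF : qfact q n ≠ 0 := ne_of_gt (qfact_pos hq n)
  have hAiAj : Ai = Aj := mul_left_cancel₀ hFm (h4.symm.trans h5)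
  have key : Aij * qfact q n = Ai * Aj := by
    rw [h4, ← hAiAj, h6]
    ring
  rw [h1, h2, h3, div_mul_div_comm, div_eq_div_iff hF (mul_ne_zero hF hF)]
  linear_combination (q ^ inversions σ * q ^ inversions σ * qfact q n) * key

end MallowsAux


/-- weak dissociation: under Mallows(q) on `S_n`, the indicator events that
`σ` occurs at positions `i` and `j` are independent whenever `|i - j| ≥ m`. -/
theorem mallows_windows_independent (m n : ℕ) (hm : 1 ≤ m) (σ : Equiv.Perm (Fin m))
    (q : ℝ) (hq : 0 < q) (i j : ℕ) (hi : i + m ≤ n) (hj : j + m ≤ n)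
    (hij : i + m ≤ j ∨ j + m ≤ i) :
    (∑ π ∈ Finset.univ.filter
        (fun π : Equiv.Perm (Fin n) => occursAt σ π i ∧ occursAt σ π j),
      q ^ inversions π) / qfact q n
    = ((∑ π ∈ Finset.univ.filter (fun π : Equiv.Perm (Fin n) => occursAt σ π i),
          q ^ inversions π) / qfact q n) *
      ((∑ π ∈ Finset.univ.filter (fun π : Equiv.Perm (Fin n) => occursAt σ π j),
          q ^ inversions π) / qfact q n) := by
  rcases hij with hd | hd
  · exact MallowsAux.main_aux m n σ q hq i j hi hj hd
  · have hswap : Finset.univ.filter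
        (fun π : Equiv.Perm (Fin n) => occursAt σ π i ∧ occursAt σ π j)
        = Finset.univ.filter
        (fun π : Equiv.Perm (Fin n) => occursAt σ π j ∧ occursAt σ π i) :=
      Finset.filter_congr (fun π _ => and_comm)
    rw [hswap, MallowsAux.main_aux m n σ q hq j i hj hi hd, mul_comm]
end

section
/- Fix m ≥ 3, σ ∈ S_m, and q > 0. For n ≥ m, the probability that a Mallows(q) random permutation of length n avoids σ satisfies P_n(σ,q) ≤ (1 − q^{inv(σ)}/[m]_q!)^{⌊n/m⌋}. Consequently, the growth rate satisfies ρ(σ,q) ≤ (1 − q^{inv(σ)}/[m]_q!)^{1/m}. -/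
open scoped Classical

namespace MPA

variable {m r : ℕ}

lemma compl_card (S : Finset (Fin (m + r))) (hS : S.card = m) : Sᶜ.card = r := by
  rw [Finset.card_compl, hS]; simp

noncomputable def e1 (S : Finset (Fin (m + r))) (hS : S.card = m) : Fin m ↪o Fin (m + r) :=
  S.orderEmbOfFin hS

noncomputable def e2 (S : Finset (Fin (m + r))) (hS : S.card = m) : Fin r ↪o Fin (m + r) :=
  Sᶜ.orderEmbOfFin (compl_card S hS)

lemma e1_mem (S : Finset (Fin (m + r))) (hS : S.card = m) (a : Fin m) : e1 S hS a ∈ S :=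
  Finset.orderEmbOfFin_mem _ _ _

lemma e2_not_mem (S : Finset (Fin (m + r))) (hS : S.card = m) (b : Fin r) : e2 S hS b ∉ S := by
  have h := Finset.orderEmbOfFin_mem Sᶜ (compl_card S hS) b
  rw [Finset.mem_compl] at h
  exact h

noncomputable def psi (S : Finset (Fin (m + r))) (hS : S.card = m)
    (τ : Equiv.Perm (Fin m)) (ρ : Equiv.Perm (Fin r)) : Equiv.Perm (Fin (m + r)) :=
  Equiv.ofBijective
    (fun x => Sum.elim (fun a => e1 S hS (τ a)) (fun b => e2 S hS (ρ b)) (finSumFinEquiv.symm x))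
    (by
      rw [Finite.injective_iff_bijective.symm]
      intro x y hxy
      have h : Function.Injective
          (Sum.elim (fun a => e1 S hS (τ a)) (fun b => e2 S hS (ρ b))) := by
        rintro (a | b) (a' | b') h
        · simp only [Sum.elim_inl] at h
          exact congrArg Sum.inl (τ.injective ((e1 S hS).injective h))
        · simp only [Sum.elim_inl, Sum.elim_inr] at h
          exact absurd (h ▸ e1_mem S hS (τ a)) (e2_not_mem S hS (ρ b'))
        · simp only [Sum.elim_inl, Sum.elim_inr] at h
          exact absurd (h.symm ▸ e1_mem S hS (τ a')) (e2_not_mem S hS (ρ b))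
        · simp only [Sum.elim_inr] at h
          exact congrArg Sum.inr (ρ.injective ((e2 S hS).injective h))
      exact finSumFinEquiv.symm.injective (h hxy))

lemma psi_castAdd (S : Finset (Fin (m + r))) (hS : S.card = m)
    (τ : Equiv.Perm (Fin m)) (ρ : Equiv.Perm (Fin r)) (a : Fin m) :
    psi S hS τ ρ (Fin.castAdd r a) = e1 S hS (τ a) := by
  simp [psi, Equiv.ofBijective_apply, finSumFinEquiv_symm_apply_castAdd]

lemma psi_natAdd (S : Finset (Fin (m + r))) (hS : S.card = m)
    (τ : Equiv.Perm (Fin m)) (ρ : Equiv.Perm (Fin r)) (b : Fin r) :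
    psi S hS τ ρ (Fin.natAdd m b) = e2 S hS (ρ b) := by
  simp [psi, Equiv.ofBijective_apply, finSumFinEquiv_symm_apply_natAdd]

end MPA

namespace MPA
variable {m r : ℕ}

lemma inversions_eq_sum {n : ℕ} (π : Equiv.Perm (Fin n)) :
    inversions π = ∑ p : Fin n × Fin n, if p.1 < p.2 ∧ π p.2 < π p.1 then 1 else 0 := by
  rw [inversions, Finset.card_filter]

noncomputable def wcount (S : Finset (Fin (m + r))) (hS : S.card = m) : ℕ :=
  ∑ a : Fin m, ∑ b : Fin r, if e2 S hS b < e1 S hS a then 1 else 0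

lemma inversions_psi (S : Finset (Fin (m + r))) (hS : S.card = m)
    (τ : Equiv.Perm (Fin m)) (ρ : Equiv.Perm (Fin r)) :
    inversions (psi S hS τ ρ) = inversions τ + inversions ρ + wcount S hS := by
  have key : (inversions (psi S hS τ ρ) : ℕ)
      = ∑ x : Fin m ⊕ Fin r, ∑ y : Fin m ⊕ Fin r,
          (if finSumFinEquiv x < finSumFinEquiv y ∧
             psi S hS τ ρ (finSumFinEquiv y) < psi S hS τ ρ (finSumFinEquiv x) then 1 else 0) := by
    rw [inversions_eq_sum,
      ← Equiv.sum_comp (Equiv.prodCongr finSumFinEquiv finSumFinEquiv)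
        (fun p : Fin (m+r) × Fin (m+r) =>
          if p.1 < p.2 ∧ psi S hS τ ρ p.2 < psi S hS τ ρ p.1 then 1 else 0),
      Fintype.sum_prod_type]
    rfl
  rw [key]
  simp only [Fintype.sum_sum_type, finSumFinEquiv_apply_left, finSumFinEquiv_apply_right,
    psi_castAdd, psi_natAdd]
  rw [Finset.sum_add_distrib, Finset.sum_add_distrib]
  have hll : (∑ a : Fin m, ∑ a' : Fin m,
      if Fin.castAdd r a < Fin.castAdd r a' ∧ e1 S hS (τ a') < e1 S hS (τ a) then 1 else 0)
      = inversions τ := by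
    rw [inversions_eq_sum, Fintype.sum_prod_type]
    apply Finset.sum_congr rfl; intro a _
    apply Finset.sum_congr rfl; intro a' _
    have h1 : (Fin.castAdd r a < Fin.castAdd r a') ↔ a < a' := by
      simp only [Fin.lt_def, Fin.coe_castAdd]
    have h2 : (e1 S hS (τ a') < e1 S hS (τ a)) ↔ τ a' < τ a := (e1 S hS).lt_iff_lt
    simp only [h1, h2]
  have hrr : (∑ b : Fin r, ∑ b' : Fin r,
      if Fin.natAdd m b < Fin.natAdd m b' ∧ e2 S hS (ρ b') < e2 S hS (ρ b) then 1 else 0)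
      = inversions ρ := by
    rw [inversions_eq_sum, Fintype.sum_prod_type]
    apply Finset.sum_congr rfl; intro b _
    apply Finset.sum_congr rfl; intro b' _
    have h1 : (Fin.natAdd m b < Fin.natAdd m b') ↔ b < b' := by
      simp only [Fin.lt_def, Fin.coe_natAdd]
      omega
    have h2 : (e2 S hS (ρ b') < e2 S hS (ρ b)) ↔ ρ b' < ρ b := (e2 S hS).lt_iff_lt
    simp only [h1, h2]
  have hrl : (∑ b : Fin r, ∑ a : Fin m,
      if Fin.natAdd m b < Fin.castAdd r a ∧ e1 S hS (τ a) < e2 S hS (ρ b) then 1 else 0)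
      = 0 := by
    apply Finset.sum_eq_zero; intro b _
    apply Finset.sum_eq_zero; intro a _
    have : ¬ (Fin.natAdd m b < Fin.castAdd r a) := by
      simp only [Fin.lt_def, Fin.coe_natAdd, Fin.coe_castAdd, not_lt]
      omega
    simp [this]
  have hlr : (∑ a : Fin m, ∑ b : Fin r,
      if Fin.castAdd r a < Fin.natAdd m b ∧ e2 S hS (ρ b) < e1 S hS (τ a) then 1 else 0)
      = wcount S hS := by
    rw [wcount, ← Equiv.sum_comp τ (fun a => ∑ b : Fin r, if e2 S hS b < e1 S hS a then 1 else 0)]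
    apply Finset.sum_congr rfl; intro a _
    rw [← Equiv.sum_comp ρ (fun b => if e2 S hS b < e1 S hS (τ a) then 1 else 0)]
    apply Finset.sum_congr rfl; intro b _
    have h1 : (Fin.castAdd r a < Fin.natAdd m b) := by
      simp only [Fin.lt_def, Fin.coe_castAdd, Fin.coe_natAdd]
      omega
    simp [h1]
  rw [hll, hrr, hrl, hlr]
  omega

end MPA

namespace MPA
variable {m r : ℕ}

lemma image_psi (S : Finset (Fin (m + r))) (hS : S.card = m)
    (τ : Equiv.Perm (Fin m)) (ρ : Equiv.Perm (Fin r)) :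
    Finset.image (fun a : Fin m => psi S hS τ ρ (Fin.castAdd r a)) Finset.univ = S := by
  apply Finset.coe_injective
  rw [Finset.coe_image, Finset.coe_univ, Set.image_univ]
  have h : (fun a : Fin m => psi S hS τ ρ (Fin.castAdd r a)) = (e1 S hS) ∘ τ := by
    funext a; exact psi_castAdd S hS τ ρ a
  rw [h, Set.range_comp, Equiv.range_eq_univ, Set.image_univ]
  exact Finset.range_orderEmbOfFin S hS

abbrev Idx (m r : ℕ) :=
  {S : Finset (Fin (m + r)) // S.card = m} × Equiv.Perm (Fin m) × Equiv.Perm (Fin r)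

noncomputable def Psi (x : Idx m r) : Equiv.Perm (Fin (m + r)) := psi x.1.1 x.1.2 x.2.1 x.2.2

lemma Psi_inj : Function.Injective (Psi : Idx m r → Equiv.Perm (Fin (m + r))) := by
  rintro ⟨⟨S, hS⟩, τ, ρ⟩ ⟨⟨S', hS'⟩, τ', ρ'⟩ h
  simp only [Psi] at h
  have hSS : S = S' := by
    rw [← image_psi S hS τ ρ, ← image_psi S' hS' τ' ρ', h]
  subst hSS
  have hτ : τ = τ' := by
    apply Equiv.ext; intro a
    apply (e1 S hS).injective
    rw [← psi_castAdd S hS τ ρ a, h, psi_castAdd]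
  have hρ : ρ = ρ' := by
    apply Equiv.ext; intro b
    apply (e2 S hS).injective
    rw [← psi_natAdd S hS τ ρ b, h, psi_natAdd]
  subst hτ; subst hρ; rfl

lemma card_idx : Fintype.card (Idx m r) = Fintype.card (Equiv.Perm (Fin (m + r))) := by
  rw [Fintype.card_prod, Fintype.card_prod, Fintype.card_perm, Fintype.card_perm,
    Fintype.card_perm, Fintype.card_fin, Fintype.card_fin, Fintype.card_fin,
    Fintype.card_subtype]
  have h1 : (Finset.univ.filter fun S : Finset (Fin (m + r)) => S.card = m)
      = Finset.powersetCard m Finset.univ := by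
    rw [Finset.powersetCard_eq_filter, Finset.powerset_univ]
  rw [h1, Finset.card_powersetCard, Finset.card_univ, Fintype.card_fin]
  have h2 := Nat.choose_mul_factorial_mul_factorial (Nat.le_add_right m r)
  rw [Nat.add_sub_cancel_left] at h2
  rw [← h2]; ring

lemma master_sum (f : Equiv.Perm (Fin (m + r)) → ℝ) :
    ∑ π : Equiv.Perm (Fin (m + r)), f π
      = ∑ S : {S : Finset (Fin (m + r)) // S.card = m}, ∑ τ : Equiv.Perm (Fin m),
          ∑ ρ : Equiv.Perm (Fin r), f (psi S.1 S.2 τ ρ) := by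
  have hbij : Function.Bijective (Psi : Idx m r → Equiv.Perm (Fin (m + r))) :=
    (Fintype.bijective_iff_injective_and_card Psi).mpr ⟨Psi_inj, card_idx⟩
  rw [← Fintype.sum_bijective Psi hbij (fun x => f (Psi x)) f (fun x => rfl)]
  rw [Fintype.sum_prod_type]
  apply Finset.sum_congr rfl; intro S _
  rw [Fintype.sum_prod_type]
  rfl

noncomputable def permSum (q : ℝ) (n : ℕ) : ℝ := ∑ π : Equiv.Perm (Fin n), q ^ inversions π

noncomputable def Wsum (q : ℝ) (m r : ℕ) : ℝ :=
  ∑ S : {S : Finset (Fin (m + r)) // S.card = m}, q ^ wcount S.1 S.2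

lemma master_cond (q : ℝ) (P : Equiv.Perm (Fin (m + r)) → Prop)
    (G : Equiv.Perm (Fin m) → Prop) (H : Equiv.Perm (Fin r) → Prop)
    (hP : ∀ S hS τ ρ, P (psi S hS τ ρ) ↔ (G τ ∧ H ρ)) :
    (∑ π : Equiv.Perm (Fin (m + r)), if P π then q ^ inversions π else 0)
      = Wsum q m r * ((∑ τ : Equiv.Perm (Fin m), if G τ then q ^ inversions τ else 0)
        * (∑ ρ : Equiv.Perm (Fin r), if H ρ then q ^ inversions ρ else 0)) := by
  rw [master_sum (fun π => if P π then q ^ inversions π else 0)]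
  rw [Wsum, Finset.sum_mul]
  apply Finset.sum_congr rfl; intro S _
  rw [Finset.sum_mul_sum, Finset.mul_sum]
  apply Finset.sum_congr rfl; intro τ _
  rw [Finset.mul_sum]
  apply Finset.sum_congr rfl; intro ρ _
  rw [hP S.1 S.2 τ ρ, inversions_psi]
  by_cases hG : G τ <;> by_cases hH : H ρ <;> simp [hG, hH, pow_add] <;> ring

lemma permSum_split (q : ℝ) : permSum q (m + r) = Wsum q m r * (permSum q m * permSum q r) := by
  have h := master_cond (m := m) (r := r) q (fun _ => True) (fun _ => True) (fun _ => True)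
    (fun _ _ _ _ => by simp)
  simpa [permSum] using h

end MPA

namespace MPA

lemma sum_comp_orderEmbOfFin {N k : ℕ} (s : Finset (Fin N)) (h : s.card = k)
    (g : Fin N → ℕ) :
    ∑ b : Fin k, g (s.orderEmbOfFin h b) = ∑ y ∈ s, g y := by
  have himg : Finset.image (s.orderEmbOfFin h) Finset.univ = s := by
    apply Finset.coe_injective
    rw [Finset.coe_image, Finset.coe_univ, Set.image_univ]
    exact Finset.range_orderEmbOfFin s h
  conv_rhs => rw [← himg]
  rw [Finset.sum_image (fun x _ y _ hxy => (s.orderEmbOfFin h).injective hxy)]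

lemma wcount_singleton {n : ℕ} (x : Fin (1 + n)) :
    wcount {x} (Finset.card_singleton x) = (x : ℕ) := by
  rw [wcount]
  rw [Fin.sum_univ_one]
  have he1 : e1 {x} (Finset.card_singleton x) 0 = x :=
    Finset.mem_singleton.mp (e1_mem {x} (Finset.card_singleton x) 0)
  have : (∑ b : Fin n, if e2 {x} (Finset.card_singleton x) b < e1 {x} (Finset.card_singleton x) 0
      then 1 else 0) = ∑ y ∈ ({x}ᶜ : Finset (Fin (1 + n))), if y < x then 1 else 0 := by
    rw [he1]
    exact sum_comp_orderEmbOfFin _ _ (fun y => if y < x then 1 else 0)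
  rw [this, ← Finset.card_filter]
  have hf : ({x}ᶜ : Finset (Fin (1 + n))).filter (fun y => y < x) = Finset.Iio x := by
    ext y
    simp only [Finset.mem_filter, Finset.mem_compl, Finset.mem_singleton, Finset.mem_Iio]
    constructor
    · exact fun h => h.2
    · exact fun h => ⟨ne_of_lt h, h⟩
  rw [hf, Fin.card_Iio]

lemma Wsum_one (q : ℝ) (n : ℕ) : Wsum q 1 n = qint q (1 + n) := by
  have hbij : Function.Bijective
      (fun x : Fin (1 + n) => (⟨{x}, Finset.card_singleton x⟩ :
        {S : Finset (Fin (1 + n)) // S.card = 1})) := by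
    constructor
    · intro x y hxy
      exact Finset.singleton_injective (congrArg Subtype.val hxy)
    · rintro ⟨S, hS⟩
      obtain ⟨x, hx⟩ := Finset.card_eq_one.mp hS
      exact ⟨x, by simp [hx]⟩
  rw [Wsum, ← Fintype.sum_bijective _ hbij (fun x => q ^ (x : ℕ))
    (fun S => q ^ wcount S.1 S.2) (fun x => by simp [wcount_singleton x])]
  rw [qint, ← Fin.sum_univ_eq_sum_range]

end MPA

namespace MPA

lemma inversions_of_subsingleton {n : ℕ} [Subsingleton (Fin n)] (π : Equiv.Perm (Fin n)) :
    inversions π = 0 := by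
  rw [inversions, Finset.card_eq_zero, Finset.filter_eq_empty_iff]
  intro p _
  rw [Subsingleton.elim p.1 p.2]
  simp

lemma permSum_zero (q : ℝ) : permSum q 0 = 1 := by
  rw [permSum]
  simp [inversions_of_subsingleton, Finset.card_univ]

lemma permSum_one (q : ℝ) : permSum q 1 = 1 := by
  rw [permSum]
  simp only [inversions_of_subsingleton, pow_zero]
  rw [Finset.sum_const, Finset.card_univ, Fintype.card_perm]
  simp

lemma qfact_zero (q : ℝ) : qfact q 0 = 1 := by simp [qfact]

lemma permSum_eq_qfact (q : ℝ) : ∀ n, permSum q n = qfact q n := by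
  intro n
  induction n with
  | zero => rw [permSum_zero, qfact_zero]
  | succ n ih =>
    have h1 : permSum q (n + 1) = permSum q (1 + n) := by rw [Nat.add_comm]
    rw [h1, permSum_split, Wsum_one, permSum_one, ih, one_mul]
    show qint q (1 + n) * qfact q n = qfact q (n + 1)
    rw [qfact, qfact, Finset.prod_range_succ, Nat.add_comm 1 n]
    ring

lemma qint_pos {q : ℝ} (hq : 0 < q) {k : ℕ} (hk : 0 < k) : 0 < qint q k := by
  rw [qint]
  apply Finset.sum_pos (fun i _ => pow_pos hq i)
  exact ⟨0, Finset.mem_range.mpr hk⟩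

lemma qfact_pos {q : ℝ} (hq : 0 < q) (n : ℕ) : 0 < qfact q n := by
  rw [qfact]
  exact Finset.prod_pos (fun i _ => qint_pos hq (Nat.succ_pos i))

lemma Wsum_eq (q : ℝ) (hq : 0 < q) (m r : ℕ) :
    Wsum q m r = qfact q (m + r) / (qfact q m * qfact q r) := by
  have h := permSum_split (m := m) (r := r) q
  rw [permSum_eq_qfact, permSum_eq_qfact, permSum_eq_qfact] at h
  rw [eq_div_iff (ne_of_gt (mul_pos (qfact_pos hq m) (qfact_pos hq r)))]
  exact h.symm

end MPA

namespace MPA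

lemma perm_eq_of_lt_iff {m : ℕ} (σ τ : Equiv.Perm (Fin m))
    (h : ∀ a b : Fin m, σ a < σ b ↔ τ a < τ b) : τ = σ := by
  have hmono : StrictMono (⇑τ ∘ ⇑σ.symm) := by
    intro x y hxy
    have : σ (σ.symm x) < σ (σ.symm y) := by
      rw [Equiv.apply_symm_apply, Equiv.apply_symm_apply]; exact hxy
    exact (h (σ.symm x) (σ.symm y)).mp this
  have hsurj : Function.Surjective (⇑τ ∘ ⇑σ.symm) :=
    τ.surjective.comp σ.symm.surjective
  set e := StrictMono.orderIsoOfSurjective _ hmono hsurj with he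
  apply Equiv.ext; intro a
  have h2 : ∀ x : Fin m, τ (σ.symm x) = x := by
    intro x
    have h3 := Fin.coe_orderIso_apply e x
    have h4 : (e x : Fin m) = τ (σ.symm x) := rfl
    apply Fin.ext
    rw [← h4, h3]
  have := h2 (σ a)
  simpa using this

variable {m r : ℕ}

lemma occursAt_psi_zero (σ : Equiv.Perm (Fin m)) (S : Finset (Fin (m + r))) (hS : S.card = m)
    (τ : Equiv.Perm (Fin m)) (ρ : Equiv.Perm (Fin r)) :
    occursAt σ (psi S hS τ ρ) 0 ↔ τ = σ := by
  have hidx : ∀ (a : Fin m) (pf : 0 + (a : ℕ) < m + r),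
      (⟨0 + (a : ℕ), pf⟩ : Fin (m + r)) = Fin.castAdd r a := by
    intro a pf; apply Fin.ext; simp
  constructor
  · rintro ⟨h, hab⟩
    apply perm_eq_of_lt_iff σ τ
    intro a b
    have := hab a b
    rwa [hidx a _, hidx b _, psi_castAdd, psi_castAdd, (e1 S hS).lt_iff_lt] at this
  · rintro rfl
    refine ⟨by omega, fun a b => ?_⟩
    rw [hidx a _, hidx b _, psi_castAdd, psi_castAdd, (e1 S hS).lt_iff_lt]

lemma occursAt_psi_shift (σ : Equiv.Perm (Fin m)) (S : Finset (Fin (m + r))) (hS : S.card = m)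
    (τ : Equiv.Perm (Fin m)) (ρ : Equiv.Perm (Fin r)) (t : ℕ) :
    occursAt σ (psi S hS τ ρ) (m + t) ↔ occursAt σ ρ t := by
  have key : ∀ (a : Fin m) (pf : m + t + (a : ℕ) < m + r) (pf2 : t + (a : ℕ) < r),
      psi S hS τ ρ ⟨m + t + (a : ℕ), pf⟩ = e2 S hS (ρ ⟨t + (a : ℕ), pf2⟩) := by
    intro a pf pf2
    have hidx : (⟨m + t + (a : ℕ), pf⟩ : Fin (m + r)) = Fin.natAdd m ⟨t + (a : ℕ), pf2⟩ := by
      apply Fin.ext; simp [Fin.natAdd]; omega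
    rw [hidx, psi_natAdd]
  constructor
  · rintro ⟨h, hab⟩
    have h' : t + m ≤ r := by omega
    refine ⟨h', fun a b => ?_⟩
    have := hab a b
    rw [key a _ (by omega), key b _ (by omega), (e2 S hS).lt_iff_lt] at this
    exact this
  · rintro ⟨h, hab⟩
    have h' : (m + t) + m ≤ m + r := by omega
    refine ⟨h', fun a b => ?_⟩
    rw [key a _ (by omega), key b _ (by omega), (e2 S hS).lt_iff_lt]
    exact hab a b

end MPA

namespace MPA

variable {m : ℕ}

def blockOK (σ : Equiv.Perm (Fin m)) {n : ℕ} (k : ℕ) (π : Equiv.Perm (Fin n)) : Prop :=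
  ∀ j < k, ¬ occursAt σ π (j * m)

noncomputable def Bsum (q : ℝ) (σ : Equiv.Perm (Fin m)) (k n : ℕ) : ℝ :=
  ∑ π : Equiv.Perm (Fin n), if blockOK σ k π then q ^ inversions π else 0

lemma Bsum_zero (q : ℝ) (σ : Equiv.Perm (Fin m)) (n : ℕ) : Bsum q σ 0 n = qfact q n := by
  rw [Bsum, ← permSum_eq_qfact, permSum]
  apply Finset.sum_congr rfl; intro π _
  have h : blockOK σ 0 π := fun j hj => absurd hj (Nat.not_lt_zero j)
  rw [if_pos h]

lemma blockOK_psi {r : ℕ} (σ : Equiv.Perm (Fin m)) (S : Finset (Fin (m + r))) (hS : S.card = m)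
    (τ : Equiv.Perm (Fin m)) (ρ : Equiv.Perm (Fin r)) (k : ℕ) :
    blockOK σ (k + 1) (psi S hS τ ρ) ↔ (τ ≠ σ ∧ blockOK σ k ρ) := by
  constructor
  · intro h
    constructor
    · intro hτ
      apply h 0 (Nat.succ_pos k)
      rw [Nat.zero_mul, occursAt_psi_zero]
      exact hτ
    · intro i hi hocc
      apply h (i + 1) (by omega)
      have hm : (i + 1) * m = m + i * m := by ring
      rw [hm, occursAt_psi_shift]
      exact hocc
  · rintro ⟨h1, h2⟩ j hj
    match j with
    | 0 =>
      rw [Nat.zero_mul, occursAt_psi_zero]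
      exact h1
    | (i + 1) =>
      have hm : (i + 1) * m = m + i * m := by ring
      rw [hm, occursAt_psi_shift]
      exact h2 i (by omega)

lemma sum_ne_sigma (q : ℝ) (σ : Equiv.Perm (Fin m)) :
    (∑ τ : Equiv.Perm (Fin m),
        @ite ℝ (τ ≠ σ) (Classical.propDecidable _) (q ^ inversions τ) 0)
      = qfact q m - q ^ inversions σ := by
  have step : ∀ τ : Equiv.Perm (Fin m),
      (@ite ℝ (τ ≠ σ) (Classical.propDecidable _) (q ^ inversions τ) 0)
        = q ^ inversions τ - (if τ = σ then q ^ inversions τ else 0) := by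
    intro τ
    by_cases h : τ = σ
    · rw [if_neg (not_not.mpr h), if_pos h, h]; ring
    · rw [if_pos h, if_neg h]; ring
  simp only [step]
  rw [Finset.sum_sub_distrib, ← permSum, permSum_eq_qfact, Finset.sum_ite_eq' Finset.univ σ]
  simp

lemma Bsum_succ (q : ℝ) (σ : Equiv.Perm (Fin m)) (k s : ℕ) :
    Bsum q σ (k + 1) (m + s)
      = Wsum q m s * ((qfact q m - q ^ inversions σ) * Bsum q σ k s) := by
  rw [Bsum, master_cond q (blockOK σ (k + 1)) (fun τ => τ ≠ σ) (blockOK σ k)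
    (fun S hS τ ρ => blockOK_psi σ S hS τ ρ k), ← Bsum]
  rw [sum_ne_sigma]

lemma Bsum_formula (q : ℝ) (hq : 0 < q) (σ : Equiv.Perm (Fin m)) (k : ℕ) :
    ∀ n : ℕ, k * m ≤ n →
      Bsum q σ k n = (1 - q ^ inversions σ / qfact q m) ^ k * qfact q n := by
  induction k with
  | zero => intro n _; rw [Bsum_zero, pow_zero, one_mul]
  | succ k ih =>
    intro n hn
    have hmn : m ≤ n := by
      have : 1 * m ≤ (k + 1) * m := Nat.mul_le_mul_right m (by omega)
      omega
    have hns : n = m + (n - m) := by omega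
    set s := n - m with hs
    have hks : k * m ≤ s := by
      have : (k + 1) * m = k * m + m := by ring
      omega
    rw [hns, Bsum_succ, ih s hks, Wsum_eq q hq]
    have hm0 := qfact_pos hq m
    have hs0 := qfact_pos hq s
    have h1 : qfact q m - q ^ inversions σ
        = qfact q m * (1 - q ^ inversions σ / qfact q m) := by
      field_simp
    rw [h1]
    rw [div_mul_eq_mul_div, div_eq_iff (mul_pos hm0 hs0).ne']
    ring

end MPA

namespace MPA

lemma Pn_nonneg {m : ℕ} (σ : Equiv.Perm (Fin m)) {q : ℝ} (hq : 0 < q) (n : ℕ) :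
    0 ≤ Pn m σ q n := by
  apply div_nonneg _ (le_of_lt (qfact_pos hq n))
  apply Finset.sum_nonneg
  intro π _
  positivity

lemma part1 {m : ℕ} (hm : 3 ≤ m) (σ : Equiv.Perm (Fin m)) {q : ℝ} (hq : 0 < q)
    (n : ℕ) (hn : m ≤ n) :
    Pn m σ q n ≤ (1 - q ^ inversions σ / qfact q m) ^ (n / m) := by
  set k := n / m with hk
  have hkm : k * m ≤ n := Nat.div_mul_le_self n m
  have hnum : (∑ π ∈ Finset.univ.filter (fun π : Equiv.Perm (Fin n) => avoids σ π),
      q ^ inversions π) ≤ Bsum q σ k n := by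
    rw [Finset.sum_filter, Bsum]
    apply Finset.sum_le_sum
    intro π _
    by_cases hA : avoids σ π
    · have hB : blockOK σ k π := fun j _ => hA (j * m)
      rw [if_pos hA, if_pos hB]
    · rw [if_neg hA]
      by_cases hB : blockOK σ k π
      · rw [if_pos hB]; positivity
      · rw [if_neg hB]
  rw [Pn, div_le_iff₀ (qfact_pos hq n)]
  calc (∑ π ∈ Finset.univ.filter (fun π : Equiv.Perm (Fin n) => avoids σ π), q ^ inversions π)
      ≤ Bsum q σ k n := hnum
    _ = (1 - q ^ inversions σ / qfact q m) ^ k * qfact q n := Bsum_formula q hq σ k n hkm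

lemma L_pos {m : ℕ} (hm : 3 ≤ m) (σ : Equiv.Perm (Fin m)) {q : ℝ} (hq : 0 < q) :
    0 < 1 - q ^ inversions σ / qfact q m := by
  have hqm := qfact_pos hq m
  rw [sub_pos, div_lt_one hqm, ← permSum_eq_qfact, permSum]
  set x : Fin m := ⟨0, by omega⟩
  set y : Fin m := ⟨1, by omega⟩
  have hxy : x ≠ y := by
    intro h
    have := congrArg Fin.val h
    simp [x, y] at this
  set τ0 : Equiv.Perm (Fin m) := σ * Equiv.swap x y with hτ0
  have hτ0σ : τ0 ≠ σ := by
    intro h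
    have h1 : τ0 x = σ y := by
      simp [hτ0, Equiv.Perm.mul_apply, Equiv.swap_apply_left]
    rw [h] at h1
    exact hxy (σ.injective h1)
  apply Finset.single_lt_sum hτ0σ (Finset.mem_univ σ) (Finset.mem_univ τ0)
    (pow_pos hq _) (fun τ _ _ => le_of_lt (pow_pos hq _))

end MPA

namespace MPA

open Filter

lemma div_floor_tendsto (m : ℕ) (hm : 3 ≤ m) :
    Tendsto (fun n : ℕ => ((n / m : ℕ) : ℝ) / (n : ℝ)) atTop (nhds (1 / (m : ℝ))) := by
  have hm0 : (0 : ℝ) < m := by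
    have : 0 < m := by omega
    exact_mod_cast this
  apply tendsto_of_tendsto_of_tendsto_of_le_of_le'
    (g := fun n : ℕ => 1 / (m : ℝ) - 1 / (n : ℝ)) (h := fun _ : ℕ => 1 / (m : ℝ))
  · have := tendsto_const_nhds (x := 1 / (m : ℝ)) (f := atTop (α := ℕ))
    have h2 := this.sub tendsto_one_div_atTop_nhds_zero_nat
    simpa using h2
  · exact tendsto_const_nhds
  · filter_upwards [eventually_ge_atTop 1] with n hn
    have hn0 : (0 : ℝ) < n := by
      have : 0 < n := by omega
      exact_mod_cast this
    have hnat : (n : ℝ) < m * ((n / m : ℕ) : ℝ) + m := by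
      have h1 := Nat.div_add_mod n m
      have h2 : n % m < m := Nat.mod_lt n (by omega)
      have h3 : n < m * (n / m) + m := by omega
      exact_mod_cast h3
    rw [le_div_iff₀ hn0, sub_mul]
    have h4 : 1 / (n : ℝ) * n = 1 := by field_simp
    have h5 : 1 / (m : ℝ) * n = n / m := by ring
    rw [h4, h5, sub_le_iff_le_add, div_le_iff₀ hm0]
    linarith
  · filter_upwards [eventually_ge_atTop 1] with n hn
    have hn0 : (0 : ℝ) < n := by
      have : 0 < n := by omega
      exact_mod_cast this
    rw [div_le_div_iff₀ hn0 hm0, one_mul]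
    have : (n / m) * m ≤ n := Nat.div_mul_le_self n m
    exact_mod_cast this

end MPA

/-- for `m ≥ 3`, `σ ∈ S_m`, `q > 0` and `n ≥ m`,
`P_n(σ,q) ≤ (1 − q^{inv σ}/[m]_q!)^{⌊n/m⌋}`; consequently the growth rate (when it exists)
satisfies `ρ(σ,q) ≤ (1 − q^{inv σ}/[m]_q!)^{1/m}`. -/
theorem Pn_upper_bound (m : ℕ) (hm : 3 ≤ m) (σ : Equiv.Perm (Fin m)) (q : ℝ)
    (hq : 0 < q) :
    (∀ n : ℕ, m ≤ n →
      Pn m σ q n ≤ (1 - q ^ inversions σ / qfact q m) ^ (n / m)) ∧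
    (∀ ρ : ℝ,
      Filter.Tendsto (fun n : ℕ => (Pn m σ q n) ^ ((1 : ℝ) / n))
        Filter.atTop (nhds ρ) →
      ρ ≤ (1 - q ^ inversions σ / qfact q m) ^ ((1 : ℝ) / m)) := by
  constructor
  · exact fun n hn => MPA.part1 hm σ hq n hn
  · intro ρ hρ
    set L := 1 - q ^ inversions σ / qfact q m with hL
    have hLpos : 0 < L := MPA.L_pos hm σ hq
    have hfg : ∀ n : ℕ, m ≤ n →
        Pn m σ q n ^ ((1 : ℝ) / n) ≤ L ^ (((n / m : ℕ) : ℝ) / (n : ℝ)) := by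
      intro n hn
      have h1 : Pn m σ q n ^ ((1 : ℝ) / n) ≤ (L ^ (n / m)) ^ ((1 : ℝ) / n) :=
        Real.rpow_le_rpow (MPA.Pn_nonneg σ hq n) (MPA.part1 hm σ hq n hn) (by positivity)
      have h2 : (L ^ (n / m)) ^ ((1 : ℝ) / n) = L ^ (((n / m : ℕ) : ℝ) / (n : ℝ)) := by
        rw [← Real.rpow_natCast L (n / m), ← Real.rpow_mul hLpos.le, mul_one_div]
      rw [h2] at h1
      exact h1
    have hg : Filter.Tendsto (fun n : ℕ => L ^ (((n / m : ℕ) : ℝ) / (n : ℝ)))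
        Filter.atTop (nhds (L ^ ((1 : ℝ) / (m : ℝ)))) := by
      have hc : ContinuousAt (fun x : ℝ => L ^ x) ((1 : ℝ) / (m : ℝ)) :=
        Real.continuousAt_const_rpow (ne_of_gt hLpos)
      exact hc.tendsto.comp (MPA.div_floor_tendsto m hm)
    exact le_of_tendsto_of_tendsto hρ hg
      (Filter.eventually_atTop.mpr ⟨m, fun n hn => hfg n hn⟩)
end

section
/- Let σ ∈ S_m with m ≥ 3, q > 0, and let N_n(σ,q) be the number of consecutive occurrences of σ in a Mallows(q) random permutation of length n ≥ m. Then the expected value satisfies E[N_n(σ,q)] = (n − m + 1) · q^{inv(σ)}/[m]_q!. In particular, for σ = 132 and σ = 231 and n ≥ 3, E[N_n(132,q)] = (n−2)q/[3]_q! and E[N_n(231,q)] = (n−2)q²/[3]_q!. -/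
open scoped Classical

/-- The expected number of consecutive occurrences of `σ ∈ S_m` in a Mallows(q) random
permutation of length `n` (0-indexed occurrence positions `0, …, n-m`). -/
noncomputable def expectedOcc (m : ℕ) (σ : Equiv.Perm (Fin m)) (q : ℝ) (n : ℕ) : ℝ :=
  ∑ π : Equiv.Perm (Fin n),
    (q ^ inversions π / qfact q n) *
      (((Finset.range (n - m + 1)).filter (fun j => occursAt σ π j)).card : ℝ)

namespace AuxOcc
open Finset Equiv
variable {n m j : ℕ}
def wEmb (j m : ℕ) {n : ℕ} (h : j + m ≤ n) (a : Fin m) : Fin n :=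
  ⟨j + a, lt_of_lt_of_le (Nat.add_lt_add_left a.isLt j) h⟩
@[simp] lemma wEmb_coe (h : j + m ≤ n) (a : Fin m) : ((wEmb j m h a : Fin n) : ℕ) = j + a := rfl

def inW (j m : ℕ) {n : ℕ} (i : Fin n) : Prop := j ≤ (i : ℕ) ∧ (i : ℕ) < j + m

lemma inW_wEmb (h : j + m ≤ n) (a : Fin m) : inW j m (wEmb j m h a) :=
  ⟨Nat.le_add_right j a, Nat.add_lt_add_left a.isLt j⟩

noncomputable def wFun (h : j + m ≤ n) (τ : Equiv.Perm (Fin m)) (i : Fin n) : Fin n :=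
  if hi : inW j m i then wEmb j m h (τ ⟨(i : ℕ) - j, by obtain ⟨h1, h2⟩ := hi; omega⟩) else i

lemma wFun_of_not (h : j + m ≤ n) (τ : Equiv.Perm (Fin m)) {i : Fin n} (hi : ¬ inW j m i) :
    wFun h τ i = i := dif_neg hi

lemma wFun_wEmb (h : j + m ≤ n) (τ : Equiv.Perm (Fin m)) (a : Fin m) :
    wFun h τ (wEmb j m h a) = wEmb j m h (τ a) := by
  rw [wFun, dif_pos (inW_wEmb h a)]
  congr 1
  congr 1
  apply Fin.ext
  simp

lemma inW_eq_wEmb (h : j + m ≤ n) {i : Fin n} (hi : inW j m i) :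
    i = wEmb j m h ⟨(i : ℕ) - j, by obtain ⟨h1, h2⟩ := hi; omega⟩ := by
  apply Fin.ext
  obtain ⟨h1, h2⟩ := hi
  simp [wEmb]
  omega

lemma wFun_one (h : j + m ≤ n) (i : Fin n) : wFun h 1 i = i := by
  by_cases hi : inW j m i
  · conv_lhs => rw [inW_eq_wEmb h hi]
    rw [wFun_wEmb]
    exact (inW_eq_wEmb h hi).symm
  · exact wFun_of_not h 1 hi

lemma wFun_comp (h : j + m ≤ n) (τ τ' : Equiv.Perm (Fin m)) (i : Fin n) :
    wFun h τ (wFun h τ' i) = wFun h (τ * τ') i := by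
  by_cases hi : inW j m i
  · conv_lhs => rw [inW_eq_wEmb h hi]
    conv_rhs => rw [inW_eq_wEmb h hi]
    rw [wFun_wEmb, wFun_wEmb, wFun_wEmb]
    rfl
  · rw [wFun_of_not h τ' hi, wFun_of_not h τ hi, wFun_of_not h (τ * τ') hi]

/-- The permutation of `Fin n` acting as `τ` on the window and identity outside. -/
noncomputable def wPerm (h : j + m ≤ n) (τ : Equiv.Perm (Fin m)) : Equiv.Perm (Fin n) where
  toFun := wFun h τ
  invFun := wFun h τ⁻¹
  left_inv := fun i => by rw [wFun_comp]; simp [wFun_one]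
  right_inv := fun i => by rw [wFun_comp]; simp [wFun_one]

@[simp] lemma wPerm_apply (h : j + m ≤ n) (τ : Equiv.Perm (Fin m)) (i : Fin n) :
    wPerm h τ i = wFun h τ i := rfl

lemma wPerm_mul (h : j + m ≤ n) (τ τ' : Equiv.Perm (Fin m)) :
    wPerm h τ * wPerm h τ' = wPerm h (τ * τ') :=
  Equiv.ext fun i => wFun_comp h τ τ' i

lemma wPerm_one (h : j + m ≤ n) : wPerm h 1 = 1 :=
  Equiv.ext fun i => wFun_one h i

lemma inW_wFun_iff (h : j + m ≤ n) (τ : Equiv.Perm (Fin m)) (i : Fin n) :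
    inW j m (wFun h τ i) ↔ inW j m i := by
  by_cases hi : inW j m i
  · rw [wFun, dif_pos hi]
    exact iff_of_true (inW_wEmb h _) hi
  · rw [wFun_of_not h τ hi]

lemma wFun_lt_iff (h : j + m ≤ n) (τ : Equiv.Perm (Fin m)) {a b : Fin n}
    (hab : ¬ (inW j m a ∧ inW j m b)) : wFun h τ a < wFun h τ b ↔ a < b := by
  by_cases ha : inW j m a <;> by_cases hb : inW j m b
  · exact absurd ⟨ha, hb⟩ hab
  · rw [wFun_of_not h τ hb, wFun, dif_pos ha]
    obtain ⟨ha1, ha2⟩ := ha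
    have h1 : ¬ (j ≤ (b : ℕ) ∧ (b : ℕ) < j + m) := hb
    have h2 : (τ ⟨(a : ℕ) - j, by omega⟩ : ℕ) < m := (τ _).isLt
    constructor <;> intro hlt <;> rw [Fin.lt_def] at * <;> simp at * <;> omega
  · rw [wFun_of_not h τ ha, wFun, dif_pos hb]
    obtain ⟨hb1, hb2⟩ := hb
    have h1 : ¬ (j ≤ (a : ℕ) ∧ (a : ℕ) < j + m) := ha
    have h2 : (τ ⟨(b : ℕ) - j, by omega⟩ : ℕ) < m := (τ _).isLt
    constructor <;> intro hlt <;> rw [Fin.lt_def] at * <;> simp at * <;> omega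
  · rw [wFun_of_not h τ ha, wFun_of_not h τ hb]

noncomputable def invOut (j m : ℕ) {n : ℕ} (π : Equiv.Perm (Fin n)) : ℕ :=
  (Finset.univ.filter (fun p : Fin n × Fin n =>
    (p.1 < p.2 ∧ π p.2 < π p.1) ∧ ¬(inW j m p.1 ∧ inW j m p.2))).card

noncomputable def invIn (j m : ℕ) {n : ℕ} (π : Equiv.Perm (Fin n)) : ℕ :=
  (Finset.univ.filter (fun p : Fin n × Fin n =>
    (p.1 < p.2 ∧ π p.2 < π p.1) ∧ (inW j m p.1 ∧ inW j m p.2))).card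

lemma inversions_split (π : Equiv.Perm (Fin n)) :
    inversions π = invIn j m π + invOut j m π := by
  rw [inversions, invIn, invOut,
    ← Finset.card_filter_add_card_filter_not
      (p := fun p : Fin n × Fin n => inW j m p.1 ∧ inW j m p.2)
      (s := Finset.univ.filter (fun p : Fin n × Fin n => p.1 < p.2 ∧ π p.2 < π p.1))]
  congr 1 <;> rw [Finset.filter_filter]

lemma invOut_mul_wPerm (h : j + m ≤ n) (π : Equiv.Perm (Fin n)) (τ : Equiv.Perm (Fin m)) :
    invOut j m (π * wPerm h τ) = invOut j m π := by
  rw [invOut, invOut]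
  refine Finset.card_bij' (fun p _ => (wFun h τ p.1, wFun h τ p.2))
    (fun p _ => (wFun h τ⁻¹ p.1, wFun h τ⁻¹ p.2)) ?_ ?_ ?_ ?_
  · rintro ⟨a, b⟩ hp
    simp only [Finset.mem_filter, Finset.mem_univ, true_and] at hp ⊢
    obtain ⟨⟨hlt, hval⟩, hw⟩ := hp
    refine ⟨⟨(wFun_lt_iff h τ hw).2 hlt, hval⟩, ?_⟩
    simp only [inW_wFun_iff]
    exact hw
  · rintro ⟨a, b⟩ hp
    simp only [Finset.mem_filter, Finset.mem_univ, true_and] at hp ⊢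
    obtain ⟨⟨hlt, hval⟩, hw⟩ := hp
    have e1 : wFun h τ (wFun h τ⁻¹ a) = a := by rw [wFun_comp]; simp [wFun_one]
    have e2 : wFun h τ (wFun h τ⁻¹ b) = b := by rw [wFun_comp]; simp [wFun_one]
    refine ⟨⟨(wFun_lt_iff h τ⁻¹ hw).2 hlt, ?_⟩, ?_⟩
    · show π (wPerm h τ (wFun h τ⁻¹ b)) < π (wPerm h τ (wFun h τ⁻¹ a))
      rw [wPerm_apply, wPerm_apply, e1, e2]
      exact hval
    · simp only [inW_wFun_iff]
      exact hw
  · rintro ⟨a, b⟩ _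
    have e1 : wFun h τ⁻¹ (wFun h τ a) = a := by rw [wFun_comp]; simp [wFun_one]
    have e2 : wFun h τ⁻¹ (wFun h τ b) = b := by rw [wFun_comp]; simp [wFun_one]
    simp [e1, e2]
  · rintro ⟨a, b⟩ _
    have e1 : wFun h τ (wFun h τ⁻¹ a) = a := by rw [wFun_comp]; simp [wFun_one]
    have e2 : wFun h τ (wFun h τ⁻¹ b) = b := by rw [wFun_comp]; simp [wFun_one]
    simp [e1, e2]

noncomputable def patt (j m : ℕ) {n : ℕ} (h : j + m ≤ n) (π : Equiv.Perm (Fin n)) :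
    Equiv.Perm (Fin m) :=
  (Tuple.sort (fun a => π (wEmb j m h a)))⁻¹

lemma wEmb_strictMono (h : j + m ≤ n) : StrictMono (wEmb j m h) := by
  intro a b hab
  simp only [wEmb, Fin.mk_lt_mk]
  exact Nat.add_lt_add_left hab j

lemma wEmb_injective (h : j + m ≤ n) : Function.Injective (wEmb j m h) :=
  (wEmb_strictMono h).injective

lemma patt_spec (h : j + m ≤ n) (π : Equiv.Perm (Fin n)) :
    StrictMono (fun a => π (wEmb j m h ((patt j m h π)⁻¹ a))) := by
  have hinj : Function.Injective (fun a => π (wEmb j m h a)) :=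
    fun a b hab => wEmb_injective h (π.injective hab)
  have hmono := Tuple.monotone_sort (fun a => π (wEmb j m h a))
  have hp : (patt j m h π)⁻¹ = Tuple.sort (fun a => π (wEmb j m h a)) := by
    simp [patt]
  rw [hp]
  exact hmono.strictMono_of_injective (hinj.comp (Equiv.injective _))

lemma strictMono_unique {f : Fin m → Fin n} (hf : Function.Injective f)
    {σ τ : Equiv.Perm (Fin m)} (hσ : StrictMono fun a => f (σ⁻¹ a))
    (hτ : StrictMono fun a => f (τ⁻¹ a)) : σ = τ := by
  have hr : Set.range (fun a => f (σ⁻¹ a)) = Set.range (fun a => f (τ⁻¹ a)) := by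
    have h1 : Set.range (fun a => f (σ⁻¹ a)) = Set.range f := σ⁻¹.surjective.range_comp f
    have h2 : Set.range (fun a => f (τ⁻¹ a)) = Set.range f := τ⁻¹.surjective.range_comp f
    rw [h1, h2]
  have inst : WellFoundedLT (Fin m) := inferInstance
  have heqf : (fun a => f (σ⁻¹ a)) = (fun a => f (τ⁻¹ a)) :=
    (@StrictMono.range_inj (Fin m) (Fin n) inferInstance inferInstance inst _ _ hσ hτ).1 hr
  have heq : ∀ a, f (σ⁻¹ a) = f (τ⁻¹ a) := fun a => congrFun heqf a
  have hinv : σ⁻¹ = τ⁻¹ := Equiv.ext fun a => hf (heq a)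
  exact inv_injective hinv

lemma lt_iff_of_strictMono {f : Fin m → Fin n} {σ : Equiv.Perm (Fin m)}
    (hσ : StrictMono fun a => f (σ⁻¹ a)) (x y : Fin m) : f x < f y ↔ σ x < σ y := by
  have hx : f x = f (σ⁻¹ (σ x)) := by simp
  have hy : f y = f (σ⁻¹ (σ y)) := by simp
  rw [hx, hy]
  exact hσ.lt_iff_lt

lemma patt_lt_iff (h : j + m ≤ n) (π : Equiv.Perm (Fin n)) (x y : Fin m) :
    π (wEmb j m h x) < π (wEmb j m h y) ↔ patt j m h π x < patt j m h π y :=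
  lt_iff_of_strictMono (f := fun a => π (wEmb j m h a)) (patt_spec h π) x y

lemma patt_lt_iff' (h : j + m ≤ n) (π : Equiv.Perm (Fin n)) (τ : Equiv.Perm (Fin m))
    (x y : Fin m) :
    (π * wPerm h τ) (wEmb j m h x) < (π * wPerm h τ) (wEmb j m h y) ↔
      (patt j m h π * τ) x < (patt j m h π * τ) y := by
  rw [Equiv.Perm.mul_apply, Equiv.Perm.mul_apply, wPerm_apply, wPerm_apply, wFun_wEmb,
    wFun_wEmb]
  exact patt_lt_iff h π (τ x) (τ y)

lemma invIn_mul_wPerm (h : j + m ≤ n) (π : Equiv.Perm (Fin n)) (τ : Equiv.Perm (Fin m)) :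
    invIn j m (π * wPerm h τ) = inversions (patt j m h π * τ) := by
  rw [invIn, inversions]
  symm
  refine Finset.card_bij
    (fun (p : Fin m × Fin m) _ => (wEmb j m h p.1, wEmb j m h p.2)) ?_ ?_ ?_
  · rintro ⟨a, b⟩ hp
    simp only [Finset.mem_filter, Finset.mem_univ, true_and] at hp ⊢
    obtain ⟨hlt, hval⟩ := hp
    refine ⟨⟨wEmb_strictMono h hlt, ?_⟩, inW_wEmb h a, inW_wEmb h b⟩
    exact (patt_lt_iff' h π τ b a).2 hval
  · rintro ⟨a, b⟩ _ ⟨a', b'⟩ _ hpq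
    have h1 : wEmb j m h a = wEmb j m h a' := congrArg Prod.fst hpq
    have h2 : wEmb j m h b = wEmb j m h b' := congrArg Prod.snd hpq
    rw [Prod.ext_iff]
    exact ⟨wEmb_injective h h1, wEmb_injective h h2⟩
  · rintro ⟨a, b⟩ hp
    simp only [Finset.mem_filter, Finset.mem_univ, true_and] at hp
    obtain ⟨⟨hlt, hval⟩, hwa, hwb⟩ := hp
    obtain ⟨ha1, ha2⟩ := hwa
    obtain ⟨hb1, hb2⟩ := hwb
    refine ⟨(⟨(a : ℕ) - j, by omega⟩, ⟨(b : ℕ) - j, by omega⟩), ?_, ?_⟩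
    · simp only [Finset.mem_filter, Finset.mem_univ, true_and]
      have ea : wEmb j m h ⟨(a : ℕ) - j, by omega⟩ = a := (inW_eq_wEmb h ⟨ha1, ha2⟩).symm
      have eb : wEmb j m h ⟨(b : ℕ) - j, by omega⟩ = b := (inW_eq_wEmb h ⟨hb1, hb2⟩).symm
      constructor
      · rw [Fin.mk_lt_mk]
        rw [Fin.lt_def] at hlt
        omega
      · refine (patt_lt_iff' h π τ _ _).1 ?_
        rw [ea, eb]
        exact hval
    · have ea : wEmb j m h ⟨(a : ℕ) - j, by omega⟩ = a := (inW_eq_wEmb h ⟨ha1, ha2⟩).symm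
      have eb : wEmb j m h ⟨(b : ℕ) - j, by omega⟩ = b := (inW_eq_wEmb h ⟨hb1, hb2⟩).symm
      rw [Prod.ext_iff]
      exact ⟨ea, eb⟩

lemma patt_mul_wPerm (h : j + m ≤ n) (π : Equiv.Perm (Fin n)) (τ : Equiv.Perm (Fin m)) :
    patt j m h (π * wPerm h τ) = patt j m h π * τ := by
  refine strictMono_unique (f := fun a => (π * wPerm h τ) (wEmb j m h a))
    (fun a b hab => wEmb_injective h ((π * wPerm h τ).injective hab))
    (patt_spec h _) ?_
  have key : (fun a => (π * wPerm h τ) (wEmb j m h ((patt j m h π * τ)⁻¹ a)))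
      = fun a => π (wEmb j m h ((patt j m h π)⁻¹ a)) := by
    funext a
    rw [mul_inv_rev, Equiv.Perm.mul_apply, Equiv.Perm.mul_apply, wPerm_apply, wFun_wEmb]
    simp
  rw [key]
  exact patt_spec h π

lemma inv_mul_wPerm (h : j + m ≤ n) (π : Equiv.Perm (Fin n)) (τ : Equiv.Perm (Fin m)) :
    inversions (π * wPerm h τ) = invOut j m π + inversions (patt j m h π * τ) := by
  rw [inversions_split (j := j) (m := m) (π * wPerm h τ), invIn_mul_wPerm h,
    invOut_mul_wPerm h, add_comm]

lemma inversions_decomp (h : j + m ≤ n) (π : Equiv.Perm (Fin n)) :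
    inversions π = invOut j m π + inversions (patt j m h π) := by
  have h1 := inv_mul_wPerm h π 1
  rw [wPerm_one, mul_one, mul_one] at h1
  exact h1

lemma inversions_one {k : ℕ} : inversions (1 : Equiv.Perm (Fin k)) = 0 := by
  simp only [inversions, Finset.card_eq_zero, Finset.eq_empty_iff_forall_notMem]
  rintro ⟨a, b⟩ hp
  simp only [Finset.mem_filter] at hp
  exact absurd hp.2.1 (not_lt.2 hp.2.2.le)


lemma invOut_last (π : Equiv.Perm (Fin (n + 1))) :
    invOut 0 n π = n - (π (Fin.last n) : ℕ) := by
  have hcard : invOut 0 n π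
      = (Finset.univ.filter (fun i : Fin (n + 1) => π (Fin.last n) < π i)).card := by
    rw [invOut]
    refine Finset.card_bij (fun p _ => p.1) ?_ ?_ ?_
    · rintro ⟨a, b⟩ hp
      simp only [Finset.mem_filter, Finset.mem_univ, true_and] at hp ⊢
      obtain ⟨⟨hlt, hval⟩, hw⟩ := hp
      have hb : b = Fin.last n := by
        by_contra hb
        refine hw ⟨⟨Nat.zero_le _, ?_⟩, ⟨Nat.zero_le _, ?_⟩⟩
        · have : (a : ℕ) < (b : ℕ) := hlt
          have hbn : (b : ℕ) < n + 1 := b.isLt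
          have : (b : ℕ) ≠ n := fun hc => hb (Fin.ext hc)
          omega
        · have hbn : (b : ℕ) < n + 1 := b.isLt
          have : (b : ℕ) ≠ n := fun hc => hb (Fin.ext hc)
          omega
      rw [hb] at hval
      exact hval
    · rintro ⟨a, b⟩ hp ⟨a', b'⟩ hp' hpq
      simp only [Finset.mem_filter, Finset.mem_univ, true_and] at hp hp'
      obtain ⟨⟨hlt, hval⟩, hw⟩ := hp
      obtain ⟨⟨hlt', hval'⟩, hw'⟩ := hp'
      have hb : b = Fin.last n := by
        by_contra hb
        refine hw ⟨⟨Nat.zero_le _, ?_⟩, ⟨Nat.zero_le _, ?_⟩⟩ <;>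
          [skip; skip] <;>
          · have hbn : (b : ℕ) < n + 1 := b.isLt
            have hne : (b : ℕ) ≠ n := fun hc => hb (Fin.ext hc)
            have : (a : ℕ) < (b : ℕ) := hlt
            omega
      have hb' : b' = Fin.last n := by
        by_contra hb'
        refine hw' ⟨⟨Nat.zero_le _, ?_⟩, ⟨Nat.zero_le _, ?_⟩⟩ <;>
          [skip; skip] <;>
          · have hbn : (b' : ℕ) < n + 1 := b'.isLt
            have hne : (b' : ℕ) ≠ n := fun hc => hb' (Fin.ext hc)
            have : (a' : ℕ) < (b' : ℕ) := hlt'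
            omega
      simp only [Prod.ext_iff]
      exact ⟨hpq, hb.trans hb'.symm⟩
    · intro i hi
      simp only [Finset.mem_filter, Finset.mem_univ, true_and] at hi
      have hine : i ≠ Fin.last n := fun hc => absurd hi (by rw [hc]; exact lt_irrefl _)
      have hilt : i < Fin.last n := by
        rw [Fin.lt_def]
        have := i.isLt
        have : (i : ℕ) ≠ n := fun hc => hine (Fin.ext hc)
        simp only [Fin.val_last]
        omega
      refine ⟨(i, Fin.last n), ?_, rfl⟩
      simp only [Finset.mem_filter, Finset.mem_univ, true_and]
      refine ⟨⟨hilt, hi⟩, ?_⟩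
      rintro ⟨-, ⟨-, hlast⟩⟩
      simp only [Fin.val_last] at hlast
      omega
  rw [hcard]
  have h2 : (Finset.univ.filter (fun i : Fin (n + 1) => π (Fin.last n) < π i)).card
      = (Finset.univ.filter (fun v : Fin (n + 1) => π (Fin.last n) < v)).card := by
    refine Finset.card_bij (fun i _ => π i) ?_ ?_ ?_
    · intro i hi
      simp only [Finset.mem_filter, Finset.mem_univ, true_and] at hi ⊢
      exact hi
    · intro i _ i' _ hii
      exact π.injective hii
    · intro v hv
      simp only [Finset.mem_filter, Finset.mem_univ, true_and] at hv
      exact ⟨π⁻¹ v, by simpa using hv, by simp⟩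
  rw [h2]
  have h3 : Finset.univ.filter (fun v : Fin (n + 1) => π (Fin.last n) < v)
      = Finset.Ioi (π (Fin.last n)) := by
    ext v
    simp [Finset.mem_Ioi]
  rw [h3, Fin.card_Ioi]
  simp

lemma sum_pow_inversions (q : ℝ) : ∀ k : ℕ,
    ∑ π : Equiv.Perm (Fin k), q ^ inversions π = qfact q k := by
  intro k
  induction k with
  | zero =>
    have h0 : ∀ π : Equiv.Perm (Fin 0), inversions π = 0 := fun π =>
      Subsingleton.elim π 1 ▸ inversions_one
    rw [Finset.sum_congr rfl (fun π _ => by rw [h0 π, pow_zero])]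
    simp [qfact, Fintype.card_perm]
  | succ k ih =>
    have h : 0 + k ≤ k + 1 := by omega
    have hdec : ∀ π : Equiv.Perm (Fin (k + 1)),
        inversions π = (k - (π (Fin.last k) : ℕ)) + inversions (patt 0 k h π) := by
      intro π
      rw [inversions_decomp h π, invOut_last π]
    have hbij : Function.Bijective
        (fun π : Equiv.Perm (Fin (k + 1)) => (π (Fin.last k), patt 0 k h π)) := by
      rw [Fintype.bijective_iff_injective_and_card]
      constructor
      · intro π π' heq
        have h1 : π (Fin.last k) = π' (Fin.last k) := congrArg Prod.fst heq
        have h2 : patt 0 k h π = patt 0 k h π' := congrArg Prod.snd heq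
        have hs1 : StrictMono (fun a => π (wEmb 0 k h ((patt 0 k h π)⁻¹ a))) := patt_spec h π
        have hs2 : StrictMono (fun a => π' (wEmb 0 k h ((patt 0 k h π)⁻¹ a))) := by
          rw [h2]
          exact patt_spec h π'
        have hrange : ∀ (ρ : Equiv.Perm (Fin (k + 1))), ρ (Fin.last k) = π (Fin.last k) →
            Set.range (fun a => ρ (wEmb 0 k h ((patt 0 k h π)⁻¹ a)))
              = {x : Fin (k + 1) | x ≠ π (Fin.last k)} := by
          intro ρ hρ
          ext x
          simp only [Set.mem_range, Set.mem_setOf_eq]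
          constructor
          · rintro ⟨a, rfl⟩
            intro hc
            rw [← hρ] at hc
            have hceq := ρ.injective hc
            have hv : (0 : ℕ) + (((patt 0 k h π)⁻¹ a : Fin k) : ℕ) = k := by
              simpa [Fin.val_last] using congrArg Fin.val hceq
            have hlt : (((patt 0 k h π)⁻¹ a : Fin k) : ℕ) < k := ((patt 0 k h π)⁻¹ a).isLt
            omega
          · intro hx
            have hne : ρ⁻¹ x ≠ Fin.last k := by
              intro hc
              apply hx
              rw [← hρ, ← hc]
              simp
            have hlt : ((ρ⁻¹ x : Fin (k + 1)) : ℕ) < k := by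
              have := (ρ⁻¹ x).isLt
              have : ((ρ⁻¹ x : Fin (k + 1)) : ℕ) ≠ k := fun hc => hne (Fin.ext hc)
              omega
            refine ⟨patt 0 k h π ⟨(ρ⁻¹ x : ℕ), hlt⟩, ?_⟩
            have hw : wEmb 0 k h ((patt 0 k h π)⁻¹ (patt 0 k h π ⟨(ρ⁻¹ x : ℕ), hlt⟩)) = ρ⁻¹ x := by
              rw [show ∀ (f : Equiv.Perm (Fin k)) x, f⁻¹ (f x) = x from fun f x => f.symm_apply_apply x]
              apply Fin.ext
              simp
            rw [hw]
            simp
        have hr1 := hrange π rfl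
        have hr2 := hrange π' h1.symm
        have inst : WellFoundedLT (Fin k) := inferInstance
        have heqf : (fun a => π (wEmb 0 k h ((patt 0 k h π)⁻¹ a))) = (fun a => π' (wEmb 0 k h ((patt 0 k h π)⁻¹ a))) :=
          (@StrictMono.range_inj (Fin k) (Fin (k + 1)) inferInstance inferInstance inst _ _
            hs1 hs2).1 (hr1.trans hr2.symm)
        apply Equiv.ext
        intro i
        by_cases hik : i = Fin.last k
        · rw [hik]; exact h1
        · have hlt : (i : ℕ) < k := by
            have := i.isLt
            have : (i : ℕ) ≠ k := fun hc => hik (Fin.ext hc)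
            omega
          have hwi : wEmb 0 k h ((patt 0 k h π)⁻¹ (patt 0 k h π ⟨(i : ℕ), hlt⟩)) = i := by
            rw [show ∀ (f : Equiv.Perm (Fin k)) x, f⁻¹ (f x) = x from fun f x => f.symm_apply_apply x]
            apply Fin.ext
            simp
          have := congrFun heqf (patt 0 k h π ⟨(i : ℕ), hlt⟩)
          rw [hwi] at this
          exact this
      · simp [Fintype.card_perm, Nat.factorial_succ]
    calc ∑ π : Equiv.Perm (Fin (k + 1)), q ^ inversions π
        = ∑ π : Equiv.Perm (Fin (k + 1)),
            q ^ ((k - (π (Fin.last k) : ℕ)) + inversions (patt 0 k h π)) := by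
          exact Finset.sum_congr rfl (fun π _ => by rw [hdec π])
      _ = ∑ pr : Fin (k + 1) × Equiv.Perm (Fin k),
            q ^ ((k - (pr.1 : ℕ)) + inversions pr.2) :=
          Fintype.sum_bijective _ hbij _ _ (fun π => rfl)
      _ = (∑ v : Fin (k + 1), q ^ (k - (v : ℕ))) * ∑ ρ : Equiv.Perm (Fin k),
            q ^ inversions ρ := by
          rw [Fintype.sum_prod_type, Finset.sum_mul]
          refine Finset.sum_congr rfl fun v _ => ?_
          rw [Finset.mul_sum]
          exact Finset.sum_congr rfl fun ρ _ => pow_add q _ _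
      _ = qint q (k + 1) * qfact q k := by
          rw [ih]
          congr 1
          rw [Fin.sum_univ_eq_sum_range (fun i => q ^ (k - i)) (k + 1), qint]
          have hrefl := Finset.sum_range_reflect (fun i => q ^ i) (k + 1)
          simp only [Nat.add_sub_cancel] at hrefl
          rw [← hrefl]
      _ = qfact q (k + 1) := by
          unfold qfact
          rw [Finset.prod_range_succ]
          ring


lemma occursAt_iff {σ : Equiv.Perm (Fin m)} {π : Equiv.Perm (Fin n)} (h : j + m ≤ n) :
    occursAt σ π j ↔ patt j m h π = σ := by
  constructor
  · rintro ⟨h', hc⟩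
    refine strictMono_unique (f := fun a => π (wEmb j m h a))
      (fun a b hab => wEmb_injective h (π.injective hab)) (patt_spec h π) ?_
    intro a b hab
    exact (hc (σ⁻¹ a) (σ⁻¹ b)).1 (by simpa using hab)
  · rintro rfl
    exact ⟨h, fun a b => (patt_lt_iff h π a b).symm⟩

lemma qint_pos {q : ℝ} (hq : 0 < q) (k : ℕ) : 0 < qint q (k + 1) := by
  rw [qint]
  exact Finset.sum_pos (fun i _ => pow_pos hq i) (by simp)

lemma qfact_pos {q : ℝ} (hq : 0 < q) (k : ℕ) : 0 < qfact q k := by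
  rw [qfact]
  exact Finset.prod_pos (fun i _ => qint_pos hq i)

lemma sum_filter_patt_eq (h : j + m ≤ n) (q : ℝ) (σ : Equiv.Perm (Fin m)) :
    ∑ π ∈ Finset.univ.filter (fun π : Equiv.Perm (Fin n) => patt j m h π = σ),
        q ^ inversions π
      = q ^ inversions σ *
        ∑ π ∈ Finset.univ.filter (fun π : Equiv.Perm (Fin n) => patt j m h π = 1),
          q ^ inversions π := by
  rw [Finset.mul_sum]
  symm
  refine Finset.sum_nbij' (fun ρ => ρ * wPerm h σ) (fun π => π * wPerm h σ⁻¹) ?_ ?_ ?_ ?_ ?_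
  · intro ρ hρ
    simp only [Finset.mem_filter, Finset.mem_univ, true_and] at hρ ⊢
    rw [patt_mul_wPerm h, hρ, one_mul]
  · intro π hπ
    simp only [Finset.mem_filter, Finset.mem_univ, true_and] at hπ ⊢
    rw [patt_mul_wPerm h, hπ, mul_inv_cancel]
  · intro ρ _
    show ρ * wPerm h σ * wPerm h σ⁻¹ = ρ
    rw [mul_assoc, wPerm_mul, mul_inv_cancel, wPerm_one, mul_one]
  · intro π _
    show π * wPerm h σ⁻¹ * wPerm h σ = π
    rw [mul_assoc, wPerm_mul, inv_mul_cancel, wPerm_one, mul_one]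
  · intro ρ hρ
    simp only [Finset.mem_filter, Finset.mem_univ, true_and] at hρ
    rw [inv_mul_wPerm h, hρ, one_mul, inversions_decomp h ρ, hρ, inversions_one,
      Nat.add_zero, pow_add, mul_comm]

lemma sum_all_eq (h : j + m ≤ n) (q : ℝ) :
    qfact q n = qfact q m *
      ∑ π ∈ Finset.univ.filter (fun π : Equiv.Perm (Fin n) => patt j m h π = 1),
        q ^ inversions π := by
  rw [← sum_pow_inversions q n,
    ← Finset.sum_fiberwise Finset.univ (fun π => patt j m h π)
      (fun π => q ^ inversions π)]
  have : ∀ σ : Equiv.Perm (Fin m),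
      ∑ π ∈ Finset.univ.filter (fun π : Equiv.Perm (Fin n) => patt j m h π = σ),
        q ^ inversions π
      = q ^ inversions σ *
        ∑ π ∈ Finset.univ.filter (fun π : Equiv.Perm (Fin n) => patt j m h π = 1),
          q ^ inversions π := fun σ => sum_filter_patt_eq h q σ
  rw [Finset.sum_congr rfl (fun σ _ => this σ), ← Finset.sum_mul, sum_pow_inversions q m]

lemma sum_filter_patt (h : j + m ≤ n) {q : ℝ} (hq : 0 < q) (σ : Equiv.Perm (Fin m)) :
    ∑ π ∈ Finset.univ.filter (fun π : Equiv.Perm (Fin n) => patt j m h π = σ),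
        q ^ inversions π
      = q ^ inversions σ * qfact q n / qfact q m := by
  rw [sum_filter_patt_eq h q σ]
  have hm := (qfact_pos hq m).ne'
  have := sum_all_eq h q
  field_simp
  rw [this]
  ring

lemma expectedOcc_eq {q : ℝ} (hq : 0 < q) (m : ℕ) (σ : Equiv.Perm (Fin m)) {n : ℕ}
    (hmn : m ≤ n) :
    expectedOcc m σ q n = ((n - m + 1 : ℕ) : ℝ) * (q ^ inversions σ / qfact q m) := by
  have hF := (qfact_pos hq n).ne'
  have hFm := (qfact_pos hq m).ne'
  rw [expectedOcc]
  have hcard : ∀ π : Equiv.Perm (Fin n),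
      (((Finset.range (n - m + 1)).filter (fun j => occursAt σ π j)).card : ℝ)
        = ∑ j ∈ Finset.range (n - m + 1), (if occursAt σ π j then (1 : ℝ) else 0) := by
    intro π
    rw [Finset.card_filter]
    push_cast
    rfl
  calc ∑ π : Equiv.Perm (Fin n), (q ^ inversions π / qfact q n) *
          (((Finset.range (n - m + 1)).filter (fun j => occursAt σ π j)).card : ℝ)
      = ∑ π : Equiv.Perm (Fin n), ∑ j ∈ Finset.range (n - m + 1),
          (q ^ inversions π / qfact q n) * (if occursAt σ π j then (1 : ℝ) else 0) := by
        refine Finset.sum_congr rfl fun π _ => ?_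
        rw [hcard π, Finset.mul_sum]
    _ = ∑ j ∈ Finset.range (n - m + 1), ∑ π : Equiv.Perm (Fin n),
          (q ^ inversions π / qfact q n) * (if occursAt σ π j then (1 : ℝ) else 0) :=
        Finset.sum_comm
    _ = ∑ j ∈ Finset.range (n - m + 1), q ^ inversions σ / qfact q m := by
        refine Finset.sum_congr rfl fun j hj => ?_
        rw [Finset.mem_range] at hj
        have h : j + m ≤ n := by omega
        have hocc : ∀ π : Equiv.Perm (Fin n), occursAt σ π j ↔ patt j m h π = σ :=
          fun π => occursAt_iff h
        calc ∑ π : Equiv.Perm (Fin n),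
              (q ^ inversions π / qfact q n) * (if occursAt σ π j then (1 : ℝ) else 0)
            = ∑ π : Equiv.Perm (Fin n),
              (if patt j m h π = σ then q ^ inversions π / qfact q n else 0) := by
              refine Finset.sum_congr rfl fun π _ => ?_
              by_cases hπ : occursAt σ π j
              · rw [if_pos hπ, if_pos ((hocc π).1 hπ), mul_one]
              · rw [if_neg hπ, if_neg (fun hc => hπ ((hocc π).2 hc)), mul_zero]
          _ = ∑ π ∈ Finset.univ.filter
                (fun π : Equiv.Perm (Fin n) => patt j m h π = σ),
                q ^ inversions π / qfact q n := (Finset.sum_filter _ _).symm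
          _ = (∑ π ∈ Finset.univ.filter
                (fun π : Equiv.Perm (Fin n) => patt j m h π = σ),
                q ^ inversions π) / qfact q n := by rw [Finset.sum_div]
          _ = (q ^ inversions σ * qfact q n / qfact q m) / qfact q n := by
              rw [sum_filter_patt h hq σ]
          _ = q ^ inversions σ / qfact q m := by
              field_simp
    _ = ((n - m + 1 : ℕ) : ℝ) * (q ^ inversions σ / qfact q m) := by
        rw [Finset.sum_const, Finset.card_range, nsmul_eq_mul]

end AuxOcc

/-- `E[N_n(σ,q)] = (n − m + 1)·q^{inv σ}/[m]_q!`; in particular, for the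
patterns `132` (the word `0 2 1`, i.e. `Equiv.swap 1 2` on `Fin 3`) and `231` (the word
`1 2 0`, i.e. `finRotate 3`), `E[N_n(132,q)] = (n−2)q/[3]_q!` and
`E[N_n(231,q)] = (n−2)q²/[3]_q!` for `n ≥ 3`. -/
theorem expected_occurrences (m : ℕ) (hm : 3 ≤ m) (σ : Equiv.Perm (Fin m)) (q : ℝ)
    (hq : 0 < q) :
    (∀ n : ℕ, m ≤ n →
      expectedOcc m σ q n
        = ((n - m + 1 : ℕ) : ℝ) * (q ^ inversions σ / qfact q m)) ∧
    (∀ n : ℕ, 3 ≤ n →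
      expectedOcc 3 (Equiv.swap (1 : Fin 3) 2) q n = ((n - 2 : ℕ) : ℝ) * q / qfact q 3) ∧
    (∀ n : ℕ, 3 ≤ n →
      expectedOcc 3 (finRotate 3) q n = ((n - 2 : ℕ) : ℝ) * q ^ 2 / qfact q 3) := by
  refine ⟨fun n hn => AuxOcc.expectedOcc_eq hq m σ hn, fun n hn => ?_, fun n hn => ?_⟩
  · rw [AuxOcc.expectedOcc_eq hq 3 (Equiv.swap (1 : Fin 3) 2) hn]
    have h1 : inversions (Equiv.swap (1 : Fin 3) 2) = 1 := by decide
    have h2 : n - 3 + 1 = n - 2 := by omega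
    rw [h1, h2, pow_one, mul_div_assoc]
  · rw [AuxOcc.expectedOcc_eq hq 3 (finRotate 3) hn]
    have h1 : inversions (finRotate 3) = 2 := by decide
    have h2 : n - 3 + 1 = n - 2 := by omega
    rw [h1, h2, mul_div_assoc]
end
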